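/- arXiv:1309.0888 — 4 statements merged into one kernel-verified Lean document; each statement's English description precedes it below -/
import Mathlib

section
/- Let n ≥ 2 be an integer. For any vector y ∈ Γ_{3n}, the distance in G_{3n} from the zero vector 0 to y satisfies d_{G_{3n}}(0, y) ≤ (2/3)·(number of nonzero coordinates of y), and equality holds if and only if all nonzero coordinates of y are identical. -/
open SimpleGraph

/-- The `k`th power of a graph `G`: two distinct vertices are adjacent iff their
distance in `G` is (finite and) at most `k`. -/
def SimpleGraph.power {V : Type*} (G : SimpleGraph V) (k : ℕ) : SimpleGraph V where
  Adj u v := u ≠ v ∧ G.Reachable u v ∧ G.dist u v ≤ k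
  symm := by
    constructor
    rintro u v ⟨h1, h2, h3⟩
    exact ⟨h1.symm, h2.symm, by rwa [SimpleGraph.dist_comm]⟩
  loopless := by
    constructor
    rintro v ⟨h1, -, -⟩
    exact h1 rfl

/-- `G` admits a proper coloring from the lists `L`. -/
def SimpleGraph.Choosable {V : Type*} (G : SimpleGraph V) (L : V → Finset ℕ) : Prop :=
  ∃ φ : V → ℕ, (∀ v, φ v ∈ L v) ∧ ∀ u v, G.Adj u v → φ u ≠ φ v

/-- The list chromatic number of `G`: the least `t` such that `G` is colorable from
any assignment of lists of size at least `t`. -/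
noncomputable def SimpleGraph.listChromaticNumber {V : Type*} (G : SimpleGraph V) : ℕ :=
  sInf {t : ℕ | ∀ L : V → Finset ℕ, (∀ v, t ≤ (L v).card) → G.Choosable L}

/-- The lexicographic product of two graphs. -/
def SimpleGraph.lexProd {V W : Type*} (G : SimpleGraph V) (H : SimpleGraph W) :
    SimpleGraph (V × W) where
  Adj a b := G.Adj a.1 b.1 ∨ (a.1 = b.1 ∧ H.Adj a.2 b.2)
  symm := by
    constructor
    rintro a b (h | ⟨h1, h2⟩)
    · exact Or.inl h.symm
    · exact Or.inr ⟨h1.symm, h2.symm⟩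
  loopless := by
    constructor
    rintro a (h | ⟨-, h2⟩)
    · exact G.loopless.irrefl _ h
    · exact H.loopless.irrefl _ h2

/-- Vertex set `Γ_m`: the vectors in `ℤ_3^m` whose coordinates sum to zero. -/
def GammaVert (m : ℕ) : Type := {z : Fin m → ZMod 3 // ∑ i, z i = 0}

/-- The generator `x_{i,j}`: `1` in coordinate `i`, `2` in coordinate `j`, `0` elsewhere. -/
def xvec (m : ℕ) (i j : Fin m) : Fin m → ZMod 3 :=
  fun l => if l = i then 1 else if l = j then 2 else 0

/-- The Cayley graph `G_m` on `Γ_m` with connection set `X_m = {x_{i,j} : i ≠ j}`. -/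
def Gm (m : ℕ) : SimpleGraph (GammaVert m) where
  Adj y z := ∃ i j : Fin m, i ≠ j ∧ y.1 - z.1 = xvec m i j
  symm := by
    constructor
    rintro y z ⟨i, j, hij, h⟩
    refine ⟨j, i, hij.symm, ?_⟩
    have h' : z.1 - y.1 = -(y.1 - z.1) := by ring
    rw [h', h]
    funext l
    simp only [xvec, Pi.neg_apply]
    by_cases h1 : l = i
    · subst h1
      simp only [if_pos rfl, if_neg hij]
      decide
    · by_cases h2 : l = j
      · subst h2
        simp only [if_pos rfl, if_neg h1]
        decide
      · simp only [if_neg h1, if_neg h2]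
        decide
  loopless := by
    constructor
    rintro y ⟨i, j, hij, h⟩
    have := congrFun h i
    simp [xvec] at this


namespace Aux

variable {m : ℕ}

lemma sum_split (f : Fin m → ℕ) {i j : Fin m} (hij : i ≠ j) :
    ∑ l, f l = (∑ l ∈ (Finset.univ.erase i).erase j, f l) + f i + f j := by
  have hj : j ∈ Finset.univ.erase i := by simp [Ne.symm hij]
  rw [← Finset.sum_erase_add _ _ (Finset.mem_univ i), ← Finset.sum_erase_add _ _ hj]
  ring

lemma sum_split' (f : Fin m → ZMod 3) {i j : Fin m} (hij : i ≠ j) :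
    ∑ l, f l = (∑ l ∈ (Finset.univ.erase i).erase j, f l) + f i + f j := by
  have hj : j ∈ Finset.univ.erase i := by simp [Ne.symm hij]
  rw [← Finset.sum_erase_add _ _ (Finset.mem_univ i), ← Finset.sum_erase_add _ _ hj]
  ring

lemma xvec_apply_ne (i j l : Fin m) (h1 : l ≠ i) (h2 : l ≠ j) : xvec m i j l = 0 := by
  simp [xvec, h1, h2]

lemma xvec_apply_i {i j : Fin m} : xvec m i j i = 1 := by simp [xvec]

lemma xvec_apply_j {i j : Fin m} (hij : i ≠ j) : xvec m i j j = 2 := by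
  simp [xvec, Ne.symm hij]

/-- Generic step identity for any weight `w`. -/
lemma sum_w_step (w : ZMod 3 → ℕ) (z : Fin m → ZMod 3) {i j : Fin m} (hij : i ≠ j) :
    (∑ l, w ((z + xvec m i j) l)) + w (z i) + w (z j)
      = (∑ l, w (z l)) + w (z i + 1) + w (z j + 2) := by
  rw [sum_split (fun l => w ((z + xvec m i j) l)) hij,
      sum_split (fun l => w (z l)) hij]
  have he : ∑ l ∈ (Finset.univ.erase i).erase j, w ((z + xvec m i j) l)
      = ∑ l ∈ (Finset.univ.erase i).erase j, w (z l) := by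
    apply Finset.sum_congr rfl
    intro l hl
    simp only [Finset.mem_erase] at hl
    rw [Pi.add_apply, xvec_apply_ne i j l hl.2.1 hl.1, add_zero]
  have hi : (z + xvec m i j) i = z i + 1 := by rw [Pi.add_apply, xvec_apply_i]
  have hj : (z + xvec m i j) j = z j + 2 := by rw [Pi.add_apply, xvec_apply_j hij]
  rw [he, hi, hj]
  ring

def wf : ZMod 3 → ℕ := fun c => if c = 1 then 2 else if c = 2 then 1 else 0
def wg : ZMod 3 → ℕ := fun c => if c = 1 then 1 else if c = 2 then 2 else 0
def wn : ZMod 3 → ℕ := fun c => if c = 0 then 0 else 1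

def Fk (y : Fin m → ZMod 3) : ℕ := ∑ i, wf (y i)
def Gk (y : Fin m → ZMod 3) : ℕ := ∑ i, wg (y i)
def Nk (y : Fin m → ZMod 3) : ℕ := ∑ i, wn (y i)

lemma Fk_step (z : Fin m → ZMod 3) {i j : Fin m} (hij : i ≠ j) :
    Fk (z + xvec m i j) ≤ Fk z + 3 := by
  have h := sum_w_step wf z hij
  have h1 : ∀ c : ZMod 3, wf (c + 1) ≤ wf c + 2 := by decide
  have h2 : ∀ c : ZMod 3, wf (c + 2) ≤ wf c + 1 := by decide
  have := h1 (z i); have := h2 (z j)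
  unfold Fk; omega

lemma Gk_step (z : Fin m → ZMod 3) {i j : Fin m} (hij : i ≠ j) :
    Gk (z + xvec m i j) ≤ Gk z + 3 := by
  have h := sum_w_step wg z hij
  have h1 : ∀ c : ZMod 3, wg (c + 1) ≤ wg c + 1 := by decide
  have h2 : ∀ c : ZMod 3, wg (c + 2) ≤ wg c + 2 := by decide
  have := h1 (z i); have := h2 (z j)
  unfold Gk; omega

lemma neg_xvec {i j : Fin m} (hij : i ≠ j) : -(xvec m i j) = xvec m j i := by
  funext l
  by_cases h1 : l = i
  · subst h1; rw [Pi.neg_apply, xvec_apply_i, xvec_apply_j (Ne.symm hij)]; decide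
  · by_cases h2 : l = j
    · subst h2; rw [Pi.neg_apply, xvec_apply_j hij, xvec_apply_i]; decide
    · rw [Pi.neg_apply, xvec_apply_ne i j l h1 h2, xvec_apply_ne j i l h2 h1, neg_zero]

lemma walk_lb_gen (w : ZMod 3 → ℕ) (c1 c2 : ℕ) (hc : c1 + c2 ≤ 3)
    (h1 : ∀ c : ZMod 3, w (c + 1) ≤ w c + c1)
    (h2 : ∀ c : ZMod 3, w (c + 2) ≤ w c + c2)
    {u v : GammaVert m} (p : (Gm m).Walk u v) :
    (∑ l, w (v.1 l)) ≤ (∑ l, w (u.1 l)) + 3 * p.length := by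
  induction p with
  | nil => simp
  | @cons u b v h p ih =>
    obtain ⟨i, j, hij, hd⟩ := h
    have hb : b.1 = u.1 + xvec m j i := by
      rw [← neg_xvec hij]
      have hb' : b.1 = u.1 - xvec m i j := by rw [← hd]; ring
      rw [hb']; ring
    have hstep := sum_w_step w u.1 (Ne.symm hij)
    rw [← hb] at hstep
    have := h1 (u.1 j)
    have := h2 (u.1 i)
    change _ ≤ _ + 3 * (p.length + 1)
    omega

def ak (y : Fin m → ZMod 3) : ℕ := (Finset.univ.filter (fun i => y i = 1)).card
def bk (y : Fin m → ZMod 3) : ℕ := (Finset.univ.filter (fun i => y i = 2)).card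

lemma Fk_eq (y : Fin m → ZMod 3) : Fk y = 2 * ak y + bk y := by
  unfold Fk ak bk
  rw [Finset.card_filter, Finset.card_filter, Finset.mul_sum, ← Finset.sum_add_distrib]
  refine Finset.sum_congr rfl fun i _ => ?_
  have h : ∀ c : ZMod 3, wf c = 2 * (if c = 1 then 1 else 0) + (if c = 2 then 1 else 0) := by
    decide
  exact h (y i)

lemma Gk_eq (y : Fin m → ZMod 3) : Gk y = ak y + 2 * bk y := by
  unfold Gk ak bk
  rw [Finset.card_filter, Finset.card_filter, Finset.mul_sum, ← Finset.sum_add_distrib]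
  refine Finset.sum_congr rfl fun i _ => ?_
  have h : ∀ c : ZMod 3, wg c = (if c = 1 then 1 else 0) + 2 * (if c = 2 then 1 else 0) := by
    decide
  exact h (y i)

lemma Nk_eq (y : Fin m → ZMod 3) : Nk y = ak y + bk y := by
  unfold Nk ak bk
  rw [Finset.card_filter, Finset.card_filter, ← Finset.sum_add_distrib]
  refine Finset.sum_congr rfl fun i _ => ?_
  have h : ∀ c : ZMod 3, wn c = (if c = 1 then 1 else 0) + (if c = 2 then 1 else 0) := by
    decide
  exact h (y i)

lemma Nk_card (y : Fin m → ZMod 3) :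
    (Finset.univ.filter (fun i => y i ≠ 0)).card = Nk y := by
  unfold Nk
  rw [Finset.card_filter]
  refine Finset.sum_congr rfl fun i _ => ?_
  have h : ∀ c : ZMod 3, (if c ≠ 0 then 1 else 0) = wn c := by decide
  exact h (y i)

lemma sum_eq_cast (y : Fin m → ZMod 3) :
    ∑ i, y i = ((ak y + 2 * bk y : ℕ) : ZMod 3) := by
  have h : ∀ c : ZMod 3, c = (if c = 1 then (1 : ZMod 3) else 0)
      + 2 * (if c = 2 then 1 else 0) := by decide
  calc ∑ i, y i
      = ∑ i, ((if y i = 1 then (1 : ZMod 3) else 0) + 2 * (if y i = 2 then 1 else 0)) :=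
        Finset.sum_congr rfl fun i _ => h (y i)
    _ = ((ak y + 2 * bk y : ℕ) : ZMod 3) := by
        rw [Finset.sum_add_distrib, ← Finset.mul_sum, Finset.sum_boole, Finset.sum_boole]
        push_cast
        rfl

lemma sum_xvec {i j : Fin m} (hij : i ≠ j) : ∑ l, xvec m i j l = 0 := by
  rw [sum_split' (xvec m i j) hij, xvec_apply_i, xvec_apply_j hij]
  have h : ∑ l ∈ (Finset.univ.erase i).erase j, xvec m i j l = 0 :=
    Finset.sum_eq_zero fun l hl => by
      simp only [Finset.mem_erase] at hl
      exact xvec_apply_ne i j l hl.2.1 hl.1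
  rw [h]; decide

lemma ub : ∀ (N : ℕ) (y : GammaVert m), Nk y.1 = N →
    ∃ p : (Gm m).Walk (⟨0, by simp⟩ : GammaVert m) y,
      3 * p.length ≤ max (Fk y.1) (Gk y.1) := by
  intro N
  induction N using Nat.strong_induction_on with
  | _ N ih =>
    intro y hN
    by_cases h0 : y.1 = 0
    · obtain ⟨yv, hy⟩ := y
      simp only at h0
      subst h0
      exact ⟨SimpleGraph.Walk.nil, by change 3 * 0 ≤ _; exact Nat.zero_le _⟩
    · -- setup
      have hdvd : 3 ∣ ak y.1 + 2 * bk y.1 := by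
        rw [← ZMod.natCast_eq_zero_iff, ← sum_eq_cast]
        exact y.2
      have hc : ∀ c : ZMod 3, c ≠ 0 → c = 1 ∨ c = 2 := by decide
      have hak : (Finset.univ.filter (fun l => y.1 l = 1)).card = ak y.1 := rfl
      have hbk : (Finset.univ.filter (fun l => y.1 l = 2)).card = bk y.1 := rfl
      have hex : ∃ i, y.1 i ≠ 0 := by
        by_contra hcon
        push_neg at hcon
        exact h0 (funext fun i => hcon i)
      -- main case analysis producing the step
      have key : ∃ (i j : Fin m), i ≠ j ∧
          ((y.1 i = 1 ∧ y.1 j = 2) ∨ (y.1 i = 1 ∧ y.1 j = 1 ∧ 3 ≤ ak y.1 ∧ bk y.1 = 0)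
            ∨ (y.1 i = 2 ∧ y.1 j = 2 ∧ 3 ≤ bk y.1 ∧ ak y.1 = 0)) := by
        by_cases ha : ak y.1 = 0 <;> by_cases hb : bk y.1 = 0
        · -- impossible
          exfalso
          obtain ⟨i, hi⟩ := hex
          rcases hc _ hi with h1 | h2
          · have : i ∈ Finset.univ.filter (fun l => y.1 l = 1) := by simp [h1]
            have := Finset.card_pos.mpr ⟨i, this⟩
            omega
          · have : i ∈ Finset.univ.filter (fun l => y.1 l = 2) := by simp [h2]
            have := Finset.card_pos.mpr ⟨i, this⟩
            omega
        · -- a = 0, b > 0, so 3 ∣ b, b ≥ 3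
          have hb3 : 3 ≤ bk y.1 := by omega
          obtain ⟨i, hi, j, hj, hij⟩ := Finset.one_lt_card.mp (by omega :
            1 < (Finset.univ.filter (fun l => y.1 l = 2)).card)
          simp only [Finset.mem_filter] at hi hj
          exact ⟨i, j, hij, Or.inr (Or.inr ⟨hi.2, hj.2, hb3, ha⟩)⟩
        · -- b = 0, a > 0, so 3 ∣ a, a ≥ 3
          have ha3 : 3 ≤ ak y.1 := by omega
          obtain ⟨i, hi, j, hj, hij⟩ := Finset.one_lt_card.mp (by omega :
            1 < (Finset.univ.filter (fun l => y.1 l = 1)).card)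
          simp only [Finset.mem_filter] at hi hj
          exact ⟨i, j, hij, Or.inr (Or.inl ⟨hi.2, hj.2, ha3, hb⟩)⟩
        · -- a > 0, b > 0
          obtain ⟨i, hi⟩ := Finset.card_pos.mp (by omega :
            0 < (Finset.univ.filter (fun l => y.1 l = 1)).card)
          obtain ⟨j, hj⟩ := Finset.card_pos.mp (by omega :
            0 < (Finset.univ.filter (fun l => y.1 l = 2)).card)
          simp only [Finset.mem_filter] at hi hj
          have hij : i ≠ j := by
            intro h
            rw [h, hj.2] at hi
            exact absurd hi.2 (by decide)
          exact ⟨i, j, hij, Or.inl ⟨hi.2, hj.2⟩⟩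
      obtain ⟨i, j, hij, hcase⟩ := key
      -- define z = y - x_{i,j}
      have hzsum : ∑ l, (y.1 - xvec m i j) l = 0 := by
        simp only [Pi.sub_apply]
        rw [Finset.sum_sub_distrib, y.2, sum_xvec hij, sub_zero]
      set z : GammaVert m := ⟨y.1 - xvec m i j, hzsum⟩ with hz
      have hyz : y.1 = z.1 + xvec m i j := by
        simp only [hz]
        ring
      have hadj : (Gm m).Adj z y := by
        refine ⟨j, i, Ne.symm hij, ?_⟩
        rw [← neg_xvec hij]
        simp only [hz]
        ring
      have hzi : z.1 i = y.1 i - 1 := by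
        simp only [hz, Pi.sub_apply, xvec_apply_i]
      have hzj : z.1 j = y.1 j - 2 := by
        simp only [hz, Pi.sub_apply, xvec_apply_j hij]
      -- step identities
      have hwF := sum_w_step wf z.1 hij
      have hwG := sum_w_step wg z.1 hij
      have hwN := sum_w_step wn z.1 hij
      rw [← hyz] at hwF hwG hwN
      have hFa : Fk y.1 + wf (z.1 i) + wf (z.1 j) = Fk z.1 + wf (z.1 i + 1) + wf (z.1 j + 2) := hwF
      have hGa : Gk y.1 + wg (z.1 i) + wg (z.1 j) = Gk z.1 + wg (z.1 i + 1) + wg (z.1 j + 2) := hwG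
      have hNa : Nk y.1 + wn (z.1 i) + wn (z.1 j) = Nk z.1 + wn (z.1 i + 1) + wn (z.1 j + 2) := hwN
      clear hwF hwG hwN
      -- now per-case conclude
      have hmain : Nk z.1 < N ∧ max (Fk z.1) (Gk z.1) + 3 ≤ max (Fk y.1) (Gk y.1) := by
        have hFe := Fk_eq y.1
        have hGe := Gk_eq y.1
        have hm1 := le_max_left (Fk y.1) (Gk y.1)
        have hm2 := le_max_right (Fk y.1) (Gk y.1)
        rcases hcase with ⟨h1, h2⟩ | ⟨h1, h2, ha3, hb0⟩ | ⟨h1, h2, hb3, ha0⟩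
        · have hzi0 : z.1 i = 0 := by rw [hzi, h1]; decide
          have hzj0 : z.1 j = 0 := by rw [hzj, h2]; decide
          rw [hzi0, hzj0] at hFa hGa hNa
          have e1 : wf 0 = 0 := by decide
          have e2 : wf (0+1) = 2 := by decide
          have e3 : wf (0+2) = 1 := by decide
          have e4 : wg 0 = 0 := by decide
          have e5 : wg (0+1) = 1 := by decide
          have e6 : wg (0+2) = 2 := by decide
          have e7 : wn 0 = 0 := by decide
          have e8 : wn (0+1) = 1 := by decide
          have e9 : wn (0+2) = 1 := by decide
          rw [e1, e2, e3] at hFa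
          rw [e4, e5, e6] at hGa
          rw [e7, e8, e9] at hNa
          constructor
          · omega
          · rcases max_cases (Fk z.1) (Gk z.1) with ⟨he, _⟩ | ⟨he, _⟩ <;> rw [he] <;> omega
        · have hzi0 : z.1 i = 0 := by rw [hzi, h1]; decide
          have hzj0 : z.1 j = 2 := by rw [hzj, h2]; decide
          rw [hzi0, hzj0] at hFa hGa hNa
          have e1 : wf 0 = 0 := by decide
          have e2 : wf (0+1) = 2 := by decide
          have e3 : wf 2 = 1 := by decide
          have e4 : wf ((2:ZMod 3)+2) = 2 := by decide
          have e5 : wg 0 = 0 := by decide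
          have e6 : wg (0+1) = 1 := by decide
          have e7 : wg 2 = 2 := by decide
          have e8 : wg ((2:ZMod 3)+2) = 1 := by decide
          have e9 : wn 0 = 0 := by decide
          have e10 : wn (0+1) = 1 := by decide
          have e11 : wn 2 = 1 := by decide
          have e12 : wn ((2:ZMod 3)+2) = 1 := by decide
          rw [e1, e2, e3, e4] at hFa
          rw [e5, e6, e7, e8] at hGa
          rw [e9, e10, e11, e12] at hNa
          constructor
          · omega
          · rcases max_cases (Fk z.1) (Gk z.1) with ⟨he, _⟩ | ⟨he, _⟩ <;> rw [he] <;> omega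
        · have hzi0 : z.1 i = 1 := by rw [hzi, h1]; decide
          have hzj0 : z.1 j = 0 := by rw [hzj, h2]; decide
          rw [hzi0, hzj0] at hFa hGa hNa
          have e1 : wf 1 = 2 := by decide
          have e2 : wf ((1:ZMod 3)+1) = 1 := by decide
          have e3 : wf 0 = 0 := by decide
          have e4 : wf ((0:ZMod 3)+2) = 1 := by decide
          have e5 : wg 1 = 1 := by decide
          have e6 : wg ((1:ZMod 3)+1) = 2 := by decide
          have e7 : wg 0 = 0 := by decide
          have e8 : wg ((0:ZMod 3)+2) = 2 := by decide
          have e9 : wn 1 = 1 := by decide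
          have e10 : wn ((1:ZMod 3)+1) = 1 := by decide
          have e11 : wn 0 = 0 := by decide
          have e12 : wn ((0:ZMod 3)+2) = 1 := by decide
          rw [e1, e2, e3, e4] at hFa
          rw [e5, e6, e7, e8] at hGa
          rw [e9, e10, e11, e12] at hNa
          constructor
          · omega
          · rcases max_cases (Fk z.1) (Gk z.1) with ⟨he, _⟩ | ⟨he, _⟩ <;> rw [he] <;> omega
      obtain ⟨p, hp⟩ := ih (Nk z.1) (by omega) z rfl
      refine ⟨p.concat hadj, ?_⟩
      have hl : (p.concat hadj).length = p.length + 1 := SimpleGraph.Walk.length_concat p hadj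
      omega

end Aux

/-- Let `n ≥ 2`. For any `y ∈ Γ_{3n}`, the distance from `0` to `y` in `G_{3n}` is at
most `(2/3)` times the number of nonzero coordinates of `y` (stated multiplied by 3),
with equality iff all nonzero coordinates of `y` are identical. -/
theorem dist_zero_le (n : ℕ) (hn : 2 ≤ n) (y : GammaVert (3 * n)) :
    3 * (Gm (3 * n)).dist ⟨0, by simp⟩ y ≤
      2 * (Finset.univ.filter (fun i => y.1 i ≠ 0)).card ∧
    (3 * (Gm (3 * n)).dist ⟨0, by simp⟩ y =
        2 * (Finset.univ.filter (fun i => y.1 i ≠ 0)).card ↔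
      ∀ i j : Fin (3 * n), y.1 i ≠ 0 → y.1 j ≠ 0 → y.1 i = y.1 j) := by
  classical
  obtain ⟨p, hp⟩ := Aux.ub (Aux.Nk y.1) y rfl
  have hreach : (Gm (3 * n)).Reachable ⟨0, by simp⟩ y := ⟨p⟩
  have hdp := SimpleGraph.dist_le p
  obtain ⟨q, hq⟩ := hreach.exists_walk_length_eq_dist
  have hlbF : Aux.Fk y.1 ≤ Aux.Fk ((⟨0, by simp⟩ : GammaVert (3 * n)).1) + 3 * q.length :=
    Aux.walk_lb_gen Aux.wf 2 1 (by norm_num) (by decide) (by decide) q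
  have hlbG : Aux.Gk y.1 ≤ Aux.Gk ((⟨0, by simp⟩ : GammaVert (3 * n)).1) + 3 * q.length :=
    Aux.walk_lb_gen Aux.wg 1 2 (by norm_num) (by decide) (by decide) q
  have hF0 : Aux.Fk ((⟨0, by simp⟩ : GammaVert (3 * n)).1) = 0 := by
    have hwf0 : Aux.wf 0 = 0 := by decide
    simp [Aux.Fk, hwf0]
  have hG0 : Aux.Gk ((⟨0, by simp⟩ : GammaVert (3 * n)).1) = 0 := by
    have hwg0 : Aux.wg 0 = 0 := by decide
    simp [Aux.Gk, hwg0]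
  rw [hF0] at hlbF
  rw [hG0] at hlbG
  rw [hq] at hlbF hlbG
  -- exact distance identity
  have heq : 3 * (Gm (3 * n)).dist ⟨0, by simp⟩ y = max (Aux.Fk y.1) (Aux.Gk y.1) := by
    rcases max_cases (Aux.Fk y.1) (Aux.Gk y.1) with ⟨he, _⟩ | ⟨he, _⟩ <;> rw [he] <;> omega
  have hFe := Aux.Fk_eq y.1
  have hGe := Aux.Gk_eq y.1
  have hcard : (Finset.univ.filter (fun i => y.1 i ≠ 0)).card = Aux.ak y.1 + Aux.bk y.1 := by
    rw [Aux.Nk_card, Aux.Nk_eq]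
  have hc2 : ∀ c : ZMod 3, c ≠ 0 → c ≠ 1 → c = 2 := by decide
  have hiff : (∀ i j : Fin (3 * n), y.1 i ≠ 0 → y.1 j ≠ 0 → y.1 i = y.1 j) ↔
      (Aux.ak y.1 = 0 ∨ Aux.bk y.1 = 0) := by
    constructor
    · intro h
      by_contra hcon
      push_neg at hcon
      obtain ⟨ha, hb⟩ := hcon
      have ha' : 0 < (Finset.univ.filter (fun l => y.1 l = 1)).card := Nat.pos_of_ne_zero ha
      have hb' : 0 < (Finset.univ.filter (fun l => y.1 l = 2)).card := Nat.pos_of_ne_zero hb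
      obtain ⟨i, hi⟩ := Finset.card_pos.mp ha'
      obtain ⟨j, hj⟩ := Finset.card_pos.mp hb'
      simp only [Finset.mem_filter] at hi hj
      have h12 := h i j (by rw [hi.2]; decide) (by rw [hj.2]; decide)
      rw [hi.2, hj.2] at h12
      exact absurd h12 (by decide)
    · rintro (ha | hb) i j hi hj
      · have hno1 : ∀ l, y.1 l ≠ 1 := by
          intro l hl
          have hmem : l ∈ Finset.univ.filter (fun l => y.1 l = 1) := by simp [hl]
          have hpos := Finset.card_pos.mpr ⟨l, hmem⟩
          have hlink : (Finset.univ.filter (fun l => y.1 l = 1)).card = Aux.ak y.1 := rfl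
          omega
        rw [hc2 _ hi (hno1 i), hc2 _ hj (hno1 j)]
      · have hno2 : ∀ l, y.1 l ≠ 2 := by
          intro l hl
          have hmem : l ∈ Finset.univ.filter (fun l => y.1 l = 2) := by simp [hl]
          have hpos := Finset.card_pos.mpr ⟨l, hmem⟩
          have hlink : (Finset.univ.filter (fun l => y.1 l = 2)).card = Aux.bk y.1 := rfl
          omega
        have h1 : ∀ c : ZMod 3, c ≠ 0 → c ≠ 2 → c = 1 := by decide
        rw [h1 _ hi (hno2 i), h1 _ hj (hno2 j)]
  constructor
  · rw [heq, hcard]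
    rcases max_cases (Aux.Fk y.1) (Aux.Gk y.1) with ⟨he, _⟩ | ⟨he, _⟩ <;> rw [he] <;> omega
  · rw [heq, hcard, hiff]
    rcases max_cases (Aux.Fk y.1) (Aux.Gk y.1) with ⟨he, hle⟩ | ⟨he, hle⟩ <;> rw [he] <;>
      constructor <;> intro h <;> omega
end

section
/- Let n ≥ 2 be an integer. The (2n−1)th power of G_{3n} is the complete multipartite graph K_{3⋆3^{3n−2}} (with 3^{3n−2} partite sets each of size 3), whose partite sets are exactly the equivalence classes of the relation ∼ on Γ_{3n} defined by y ∼ z if and only if y − z ∈ {0, a_{3n}, b_{3n}}, where a_{3n} = (1,…,1) and b_{3n} = (2,…,2). -/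
open SimpleGraph

section Helpers
open Finset
lemma zmod3_val_add (a b : ZMod 3) : (a + b).val ≤ a.val + b.val := by
  revert a b; decide

lemma xvec_pt {m : ℕ} {i j : Fin m} (hij : i ≠ j) (l : Fin m) :
    xvec m i j l = (if l = i then (1:ZMod 3) else 0) + (if l = j then 2 else 0) := by
  simp only [xvec]
  by_cases h1 : l = i
  · subst h1; simp [hij]
  · by_cases h2 : l = j <;> simp [h1, h2, Ne.symm hij]

lemma sum_xvec {m : ℕ} {i j : Fin m} (hij : i ≠ j) : ∑ l, xvec m i j l = 0 := by
  simp only [fun l => xvec_pt hij l]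
  rw [Finset.sum_add_distrib]
  simp [Finset.sum_ite_eq']
  decide

lemma sum_val_xvec {m : ℕ} {i j : Fin m} (hij : i ≠ j) :
    ∑ l, (xvec m i j l).val = 3 := by
  have h : ∀ l, (xvec m i j l).val = (if l = i then 1 else 0) + (if l = j then 2 else 0) := by
    intro l
    rw [xvec_pt hij l]
    by_cases h1 : l = i
    · subst h1; simp [hij]; decide
    · by_cases h2 : l = j
      · subst h2; simp [h1, Ne.symm hij]; decide
      · simp [h1, h2]
  simp only [h]
  rw [Finset.sum_add_distrib]
  simp [Finset.sum_ite_eq']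

lemma walk_val_le {m : ℕ} {y z : GammaVert m} (p : (Gm m).Walk y z) :
    ∑ l, (y.1 l - z.1 l).val ≤ 3 * p.length := by
  induction p with
  | nil => simp
  | @cons a b c h p ih =>
      obtain ⟨i, j, hij, hd⟩ := id h
      have key : ∀ l, a.1 l - c.1 l = xvec m i j l + (b.1 l - c.1 l) := by
        intro l
        have := congrFun hd l
        simp only [Pi.sub_apply] at this
        rw [← this]; ring
      calc ∑ l, (a.1 l - c.1 l).val
          ≤ ∑ l, ((xvec m i j l).val + (b.1 l - c.1 l).val) := by
            apply Finset.sum_le_sum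
            intro l _
            rw [key l]
            exact zmod3_val_add _ _
        _ = 3 + ∑ l, (b.1 l - c.1 l).val := by
            rw [Finset.sum_add_distrib, sum_val_xvec hij]
        _ ≤ 3 + 3 * p.length := by omega
        _ = 3 * (SimpleGraph.Walk.cons h p).length := by
            rw [SimpleGraph.Walk.length_cons]; ring

lemma step_lemma {m : ℕ} (y : GammaVert m) {i j : Fin m} (hij : i ≠ j) :
    ∃ y' : GammaVert m, (Gm m).Adj y y' ∧ y'.1 = y.1 - xvec m i j := by
  have hs : ∑ l, (y.1 - xvec m i j) l = 0 := by
    simp only [Pi.sub_apply]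
    rw [Finset.sum_sub_distrib, y.2, sum_xvec hij, sub_zero]
  refine ⟨show {z : Fin m → ZMod 3 // ∑ i, z i = 0} from ⟨_, hs⟩, ?_, rfl⟩
  exact ⟨i, j, hij, by simp⟩

lemma sum_val_eq_counts {m : ℕ} (d : Fin m → ZMod 3) :
    ∑ l, (d l).val =
      (univ.filter fun l => d l = 1).card + 2 * (univ.filter fun l => d l = 2).card := by
  have h : ∀ a : ZMod 3, a.val = (if a = 1 then 1 else 0) + 2 * (if a = 2 then 1 else 0) := by
    decide
  calc ∑ l, (d l).val
      = ∑ l, ((if d l = 1 then 1 else 0) + 2 * (if d l = 2 then 1 else 0)) := by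
        simp only [h]
    _ = (∑ l, if d l = 1 then 1 else 0) + 2 * ∑ l, (if d l = 2 then 1 else 0) := by
        rw [Finset.sum_add_distrib, Finset.mul_sum]
    _ = _ := by rw [Finset.card_filter, Finset.card_filter]

lemma counts_dvd {m : ℕ} (y z : GammaVert m) :
    3 ∣ (univ.filter fun l => y.1 l - z.1 l = 1).card
        + 2 * (univ.filter fun l => y.1 l - z.1 l = 2).card := by
  rw [← sum_val_eq_counts]
  have h0 : ((∑ l, (y.1 l - z.1 l).val : ℕ) : ZMod 3) = 0 := by
    push_cast
    have : ∀ l : Fin m, (((y.1 l - z.1 l).val : ℕ) : ZMod 3) = y.1 l - z.1 l := fun l =>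
      ZMod.natCast_rightInverse _
    rw [Finset.sum_congr rfl fun l _ => this l, Finset.sum_sub_distrib, y.2, z.2, sub_zero]
  exact (ZMod.natCast_eq_zero_iff _ 3).mp h0

lemma zmod3_eq_zero (a : ZMod 3) (h1 : a ≠ 1) (h2 : a ≠ 2) : a = 0 := by
  revert a; decide

lemma xvec_left {m : ℕ} (i j : Fin m) : xvec m i j i = 1 := by simp [xvec]

lemma xvec_right {m : ℕ} {i j : Fin m} (h : j ≠ i) : xvec m i j j = 2 := by
  simp [xvec, h]

lemma xvec_other {m : ℕ} {i j l : Fin m} (h1 : l ≠ i) (h2 : l ≠ j) : xvec m i j l = 0 := by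
  simp [xvec, h1, h2]

lemma z01 : ((0:ZMod 3) = 1) = False := by decide
lemma z02 : ((0:ZMod 3) = 2) = False := by decide
lemma z21 : ((2:ZMod 3) = 1) = False := by decide
lemma z12 : ((1:ZMod 3) = 2) = False := by decide

lemma exists_walk_aux {m : ℕ} (k : ℕ) : ∀ (y z : GammaVert m),
    (univ.filter fun l => y.1 l - z.1 l = 1).card + (univ.filter fun l => y.1 l - z.1 l = 2).card
      + max (univ.filter fun l => y.1 l - z.1 l = 1).card
          (univ.filter fun l => y.1 l - z.1 l = 2).card ≤ 3 * k →
    ∃ p : (Gm m).Walk y z, p.length ≤ k := by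
  induction k using Nat.strong_induction_on with
  | _ k ih =>
  intro y z hk
  set s1 := univ.filter (fun l => y.1 l - z.1 l = 1) with hs1
  set s2 := univ.filter (fun l => y.1 l - z.1 l = 2) with hs2
  have hdvd : 3 ∣ s1.card + 2 * s2.card := counts_dvd y z
  by_cases hB1 : s1.card = 0
  · by_cases hB2 : s2.card = 0
    · -- y = z
      have hy : y = z := by
        apply Subtype.ext
        funext l
        have h1 : y.1 l - z.1 l ≠ 1 := by
          intro hl
          have hmem : l ∈ s1 := by rw [hs1]; simp [hl]
          rw [Finset.card_eq_zero] at hB1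
          rw [hB1] at hmem
          exact absurd hmem (Finset.notMem_empty l)
        have h2 : y.1 l - z.1 l ≠ 2 := by
          intro hl
          have hmem : l ∈ s2 := by rw [hs2]; simp [hl]
          rw [Finset.card_eq_zero] at hB2
          rw [hB2] at hmem
          exact absurd hmem (Finset.notMem_empty l)
        exact sub_eq_zero.mp (zmod3_eq_zero _ h1 h2)
      subst hy
      exact ⟨SimpleGraph.Walk.nil, by simp⟩
    · -- case D : s1 empty, s2.card ≥ 3
      have hs2card : 3 ≤ s2.card := by omega
      have hs1empty : s1 = ∅ := Finset.card_eq_zero.mp hB1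
      have hne1 : ∀ l, y.1 l - z.1 l ≠ 1 := by
        intro l hl
        have hmem : l ∈ s1 := by rw [hs1]; simp [hl]
        rw [hs1empty] at hmem
        exact absurd hmem (Finset.notMem_empty l)
      obtain ⟨j, hj⟩ := Finset.card_pos.mp (by omega : 0 < s2.card)
      obtain ⟨j', hj'⟩ := Finset.card_pos.mp
        (by rw [Finset.card_erase_of_mem hj]; omega : 0 < (s2.erase j).card)
      obtain ⟨j'', hj''⟩ := Finset.card_pos.mp
        (by rw [Finset.card_erase_of_mem hj', Finset.card_erase_of_mem hj]; omega :
          0 < ((s2.erase j).erase j').card)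
      have hj'j : j' ≠ j := (Finset.mem_erase.mp hj').1
      have hj''j' : j'' ≠ j' := (Finset.mem_erase.mp hj'').1
      have hj''j : j'' ≠ j := (Finset.mem_erase.mp ((Finset.mem_erase.mp hj'').2)).1
      have hdj : y.1 j - z.1 j = 2 := (Finset.mem_filter.mp hj).2
      have hdj' : y.1 j' - z.1 j' = 2 :=
        (Finset.mem_filter.mp ((Finset.mem_erase.mp hj').2)).2
      have hdj'' : y.1 j'' - z.1 j'' = 2 :=
        (Finset.mem_filter.mp ((Finset.mem_erase.mp ((Finset.mem_erase.mp hj'').2)).2)).2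
      obtain ⟨y1, hadj1, hy1⟩ := step_lemma y (Ne.symm hj'j : j ≠ j')
      obtain ⟨y2, hadj2, hy2⟩ := step_lemma y1 (Ne.symm hj''j : j ≠ j'')
      have hval : ∀ l, y2.1 l - z.1 l
          = (y.1 l - z.1 l) - xvec m j j' l - xvec m j j'' l := by
        intro l
        rw [hy2, hy1]
        simp only [Pi.sub_apply]
        ring
      have hdval : ∀ l, y2.1 l - z.1 l =
          if l = j then 0 else if l = j' then 0 else if l = j'' then 0
            else y.1 l - z.1 l := by
        intro l
        rw [hval l]
        by_cases h1 : l = j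
        · rw [if_pos h1, h1, hdj, xvec_left, xvec_left]; decide
        · rw [if_neg h1]
          by_cases h2 : l = j'
          · rw [if_pos h2, h2, hdj', xvec_right hj'j,
              xvec_other hj'j (Ne.symm hj''j')]; decide
          · rw [if_neg h2]
            by_cases h3 : l = j''
            · rw [if_pos h3, h3, hdj'', xvec_other hj''j hj''j', xvec_right hj''j]
              decide
            · rw [if_neg h3, xvec_other h1 h2, xvec_other h1 h3, sub_zero, sub_zero]
      have e1 : (univ.filter fun l => y2.1 l - z.1 l = 1) = (∅ : Finset (Fin m)) := by
        ext l
        simp only [Finset.mem_filter, Finset.mem_univ, true_and, Finset.notMem_empty,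
          iff_false]
        rw [hdval l]
        by_cases h1 : l = j
        · simp [h1, z01]
        · by_cases h2 : l = j'
          · simp [h1, h2, z01]
          · by_cases h3 : l = j''
            · simp [h1, h2, h3, z01]
            · simp [h1, h2, h3, hne1 l]
      have e2 : (univ.filter fun l => y2.1 l - z.1 l = 2)
          = ((s2.erase j).erase j').erase j'' := by
        ext l
        simp only [Finset.mem_filter, Finset.mem_univ, true_and, Finset.mem_erase, hs2]
        rw [hdval l]
        by_cases h1 : l = j
        · simp [h1, z02]
        · by_cases h2 : l = j'
          · simp [h1, h2, z02]
          · by_cases h3 : l = j''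
            · simp [h1, h2, h3, z02]
            · simp [h1, h2, h3]
      have hkk : 2 ≤ k := by omega
      have hcards : (((s2.erase j).erase j').erase j'').card = s2.card - 3 := by
        rw [Finset.card_erase_of_mem hj'', Finset.card_erase_of_mem hj',
          Finset.card_erase_of_mem hj]
        omega
      obtain ⟨p, hp⟩ := ih (k - 2) (by omega) y2 z (by
        rw [e1, e2, hcards]
        simp only [Finset.card_empty]
        omega)
      refine ⟨SimpleGraph.Walk.cons hadj1 (SimpleGraph.Walk.cons hadj2 p), ?_⟩
      simp only [SimpleGraph.Walk.length_cons]
      omega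
  · by_cases hB2 : s2.card = 0
    · -- case C : s2 empty, s1.card ≥ 3
      have hs1card : 3 ≤ s1.card := by omega
      have hs2empty : s2 = ∅ := Finset.card_eq_zero.mp hB2
      have hne2 : ∀ l, y.1 l - z.1 l ≠ 2 := by
        intro l hl
        have hmem : l ∈ s2 := by rw [hs2]; simp [hl]
        rw [hs2empty] at hmem
        exact absurd hmem (Finset.notMem_empty l)
      obtain ⟨i, hi⟩ := Finset.card_pos.mp (by omega : 0 < s1.card)
      obtain ⟨i', hi'⟩ := Finset.card_pos.mp
        (by rw [Finset.card_erase_of_mem hi]; omega : 0 < (s1.erase i).card)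
      obtain ⟨i'', hi''⟩ := Finset.card_pos.mp
        (by rw [Finset.card_erase_of_mem hi', Finset.card_erase_of_mem hi]; omega :
          0 < ((s1.erase i).erase i').card)
      have hi'i : i' ≠ i := (Finset.mem_erase.mp hi').1
      have hi''i' : i'' ≠ i' := (Finset.mem_erase.mp hi'').1
      have hi''i : i'' ≠ i := (Finset.mem_erase.mp ((Finset.mem_erase.mp hi'').2)).1
      have hdi : y.1 i - z.1 i = 1 := (Finset.mem_filter.mp hi).2
      have hdi' : y.1 i' - z.1 i' = 1 :=
        (Finset.mem_filter.mp ((Finset.mem_erase.mp hi').2)).2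
      have hdi'' : y.1 i'' - z.1 i'' = 1 :=
        (Finset.mem_filter.mp ((Finset.mem_erase.mp ((Finset.mem_erase.mp hi'').2)).2)).2
      obtain ⟨y1, hadj1, hy1⟩ := step_lemma y (Ne.symm hi'i : i ≠ i')
      obtain ⟨y2, hadj2, hy2⟩ := step_lemma y1 (hi''i' : i'' ≠ i')
      have hval : ∀ l, y2.1 l - z.1 l
          = (y.1 l - z.1 l) - xvec m i i' l - xvec m i'' i' l := by
        intro l
        rw [hy2, hy1]
        simp only [Pi.sub_apply]
        ring
      have hdval : ∀ l, y2.1 l - z.1 l =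
          if l = i then 0 else if l = i' then 0 else if l = i'' then 0
            else y.1 l - z.1 l := by
        intro l
        rw [hval l]
        by_cases h1 : l = i
        · rw [if_pos h1, h1, hdi, xvec_left, xvec_other (Ne.symm hi''i) (Ne.symm hi'i)]
          decide
        · rw [if_neg h1]
          by_cases h2 : l = i'
          · rw [if_pos h2, h2, hdi', xvec_right hi'i, xvec_right (Ne.symm hi''i')]
            decide
          · rw [if_neg h2]
            by_cases h3 : l = i''
            · rw [if_pos h3, h3, hdi'', xvec_other hi''i hi''i', xvec_left]
              decide
            · rw [if_neg h3, xvec_other h1 h2, xvec_other h3 h2, sub_zero, sub_zero]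
      have e2 : (univ.filter fun l => y2.1 l - z.1 l = 2) = (∅ : Finset (Fin m)) := by
        ext l
        simp only [Finset.mem_filter, Finset.mem_univ, true_and, Finset.notMem_empty,
          iff_false]
        rw [hdval l]
        by_cases h1 : l = i
        · simp [h1, z02]
        · by_cases h2 : l = i'
          · simp [h1, h2, z02]
          · by_cases h3 : l = i''
            · simp [h1, h2, h3, z02]
            · simp [h1, h2, h3, hne2 l]
      have e1 : (univ.filter fun l => y2.1 l - z.1 l = 1)
          = ((s1.erase i).erase i').erase i'' := by
        ext l
        simp only [Finset.mem_filter, Finset.mem_univ, true_and, Finset.mem_erase, hs1]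
        rw [hdval l]
        by_cases h1 : l = i
        · simp [h1, z01]
        · by_cases h2 : l = i'
          · simp [h1, h2, z01]
          · by_cases h3 : l = i''
            · simp [h1, h2, h3, z01]
            · simp [h1, h2, h3]
      have hkk : 2 ≤ k := by omega
      have hcards : (((s1.erase i).erase i').erase i'').card = s1.card - 3 := by
        rw [Finset.card_erase_of_mem hi'', Finset.card_erase_of_mem hi',
          Finset.card_erase_of_mem hi]
        omega
      obtain ⟨p, hp⟩ := ih (k - 2) (by omega) y2 z (by
        rw [e1, e2, hcards]
        simp only [Finset.card_empty]
        omega)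
      refine ⟨SimpleGraph.Walk.cons hadj1 (SimpleGraph.Walk.cons hadj2 p), ?_⟩
      simp only [SimpleGraph.Walk.length_cons]
      omega
    · -- case B : both nonempty
      obtain ⟨i, hi⟩ := Finset.card_pos.mp (by omega : 0 < s1.card)
      obtain ⟨j, hj⟩ := Finset.card_pos.mp (by omega : 0 < s2.card)
      have hdi : y.1 i - z.1 i = 1 := (Finset.mem_filter.mp hi).2
      have hdj : y.1 j - z.1 j = 2 := (Finset.mem_filter.mp hj).2
      have hij : i ≠ j := by
        intro h
        rw [h, hdj] at hdi
        exact absurd hdi (by decide)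
      obtain ⟨y', hadj, hy'⟩ := step_lemma y hij
      have hval : ∀ l, y'.1 l - z.1 l = (y.1 l - z.1 l) - xvec m i j l := by
        intro l
        rw [hy']
        simp only [Pi.sub_apply]
        ring
      have hdval : ∀ l, y'.1 l - z.1 l =
          if l = i then 0 else if l = j then 0 else y.1 l - z.1 l := by
        intro l
        rw [hval l]
        by_cases h1 : l = i
        · rw [if_pos h1, h1, hdi, xvec_left]; decide
        · rw [if_neg h1]
          by_cases h2 : l = j
          · rw [if_pos h2, h2, hdj, xvec_right (Ne.symm hij)]; decide
          · rw [if_neg h2, xvec_other h1 h2, sub_zero]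
      have e1 : (univ.filter fun l => y'.1 l - z.1 l = 1) = s1.erase i := by
        ext l
        simp only [Finset.mem_filter, Finset.mem_univ, true_and, Finset.mem_erase, hs1]
        rw [hdval l]
        by_cases h1 : l = i
        · simp [h1, z01]
        · by_cases h2 : l = j
          · simp [h1, h2, z01, hdj, z21]
          · simp [h1, h2]
      have e2 : (univ.filter fun l => y'.1 l - z.1 l = 2) = s2.erase j := by
        ext l
        simp only [Finset.mem_filter, Finset.mem_univ, true_and, Finset.mem_erase, hs2]
        rw [hdval l]
        by_cases h1 : l = i
        · simp [h1, z02, hdi, z12]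
        · by_cases h2 : l = j
          · simp [h1, h2, z02]
          · simp [h1, h2]
      have hkk : 1 ≤ k := by omega
      obtain ⟨p, hp⟩ := ih (k - 1) (by omega) y' z (by
        rw [e1, e2, Finset.card_erase_of_mem hi, Finset.card_erase_of_mem hj]
        omega)
      refine ⟨SimpleGraph.Walk.cons hadj p, ?_⟩
      simp only [SimpleGraph.Walk.length_cons]
      omega

lemma part1 (n : ℕ) (hn : 2 ≤ n) (y z : GammaVert (3 * n)) :
    ((Gm (3 * n)).power (2 * n - 1)).Adj y z ↔
      (y.1 - z.1 ≠ 0 ∧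
       y.1 - z.1 ≠ (fun _ => 1 : Fin (3 * n) → ZMod 3) ∧
       y.1 - z.1 ≠ (fun _ => 2 : Fin (3 * n) → ZMod 3)) := by
  constructor
  · rintro ⟨hne, hreach, hdist⟩
    refine ⟨?_, ?_, ?_⟩
    · intro h0
      exact hne (Subtype.ext (sub_eq_zero.mp h0))
    · intro h1
      obtain ⟨q, hq⟩ := hreach.symm.exists_walk_length_eq_dist
      have hle := walk_val_le q
      have hq' : q.length ≤ 2 * n - 1 := by
        rw [hq, SimpleGraph.dist_comm]; exact hdist
      have hv : ∀ l, z.1 l - y.1 l = 2 := by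
        intro l
        have := congrFun h1 l
        simp only [Pi.sub_apply] at this
        have h2 : z.1 l - y.1 l = -(y.1 l - z.1 l) := by ring
        rw [h2, this]; decide
      rw [Finset.sum_congr rfl fun l _ => by rw [hv l]] at hle
      simp only [Finset.sum_const, Finset.card_univ, Fintype.card_fin, smul_eq_mul] at hle
      have : (2 : ZMod 3).val = 2 := by decide
      rw [this] at hle
      omega
    · intro h2
      obtain ⟨q, hq⟩ := hreach.exists_walk_length_eq_dist
      have hle := walk_val_le q
      have hq' : q.length ≤ 2 * n - 1 := by rw [hq]; exact hdist
      have hv : ∀ l, y.1 l - z.1 l = 2 := by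
        intro l
        have := congrFun h2 l
        simp only [Pi.sub_apply] at this
        exact this
      rw [Finset.sum_congr rfl fun l _ => by rw [hv l]] at hle
      simp only [Finset.sum_const, Finset.card_univ, Fintype.card_fin, smul_eq_mul] at hle
      have : (2 : ZMod 3).val = 2 := by decide
      rw [this] at hle
      omega
  · rintro ⟨h0, h1, h2⟩
    set s1 := univ.filter (fun l => y.1 l - z.1 l = 1) with hs1
    set s2 := univ.filter (fun l => y.1 l - z.1 l = 2) with hs2
    have hdvd : 3 ∣ s1.card + 2 * s2.card := counts_dvd y z
    have hdisj : Disjoint s1 s2 := by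
      rw [Finset.disjoint_left]
      intro l hl1 hl2
      have e1 : y.1 l - z.1 l = 1 := (Finset.mem_filter.mp hl1).2
      have e2 : y.1 l - z.1 l = 2 := (Finset.mem_filter.mp hl2).2
      rw [e1] at e2
      exact absurd e2 (by decide)
    have hsum_le : s1.card + s2.card ≤ 3 * n := by
      have := Finset.card_le_univ (s1 ∪ s2)
      rw [Finset.card_union_of_disjoint hdisj, Fintype.card_fin] at this
      exact this
    have hn1 : s1.card ≠ 3 * n := by
      intro hc
      apply h1
      funext l
      have : s1 = univ := by
        apply Finset.eq_univ_of_card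
        rw [hc, Fintype.card_fin]
      have hmem : l ∈ s1 := this ▸ Finset.mem_univ l
      exact (Finset.mem_filter.mp hmem).2
    have hn2 : s2.card ≠ 3 * n := by
      intro hc
      apply h2
      funext l
      have : s2 = univ := by
        apply Finset.eq_univ_of_card
        rw [hc, Fintype.card_fin]
      have hmem : l ∈ s2 := this ▸ Finset.mem_univ l
      exact (Finset.mem_filter.mp hmem).2
    have hbound : s1.card + s2.card + max s1.card s2.card ≤ 3 * (2 * n - 1) := by
      omega
    obtain ⟨p, hp⟩ := exists_walk_aux (2 * n - 1) y z hbound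
    have hyz : y ≠ z := by
      intro h
      exact h0 (by rw [h]; simp)
    exact ⟨hyz, ⟨p⟩, le_trans (SimpleGraph.dist_le p) hp⟩

def mkGamma {m : ℕ} (v : Fin m → ZMod 3) (h : ∑ i, v i = 0) : GammaVert m :=
  show {z : Fin m → ZMod 3 // ∑ i, z i = 0} from ⟨v, h⟩

lemma mkGamma_val {m : ℕ} (v : Fin m → ZMod 3) (h : ∑ i, v i = 0) :
    (mkGamma v h).1 = v := rfl

lemma sum_const_zmod {m : ℕ} (hm : (3:ℕ) ∣ m) (a : ZMod 3) :
    ∑ _l : Fin m, a = 0 := by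
  rw [Finset.sum_const, Finset.card_univ, Fintype.card_fin]
  have : ((m : ℕ) : ZMod 3) = 0 := (ZMod.natCast_eq_zero_iff m 3).mpr hm
  rw [nsmul_eq_mul, this, zero_mul]

lemma shift_sum {m : ℕ} (hm : (3:ℕ) ∣ m) (y : GammaVert m) (a : ZMod 3) :
    ∑ l, (y.1 l + a) = 0 := by
  rw [Finset.sum_add_distrib, y.2, sum_const_zmod hm a, zero_add]

lemma part2 (n : ℕ) (hn : 2 ≤ n) (y : GammaVert (3 * n)) :
    Set.ncard {z : GammaVert (3 * n) |
      z.1 - y.1 = 0 ∨ z.1 - y.1 = (fun _ => 1 : Fin (3 * n) → ZMod 3) ∨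
        z.1 - y.1 = (fun _ => 2 : Fin (3 * n) → ZMod 3)} = 3 := by
  have hm : (3:ℕ) ∣ 3 * n := ⟨n, rfl⟩
  have i0 : Fin (3 * n) := ⟨0, by omega⟩
  set b := mkGamma (fun l => y.1 l + 1) (shift_sum hm y 1) with hb
  set c := mkGamma (fun l => y.1 l + 2) (shift_sum hm y 2) with hc
  rw [Set.ncard_eq_three]
  refine ⟨y, b, c, ?_, ?_, ?_, ?_⟩
  · intro h
    have := congrFun (congrArg Subtype.val h) i0
    rw [hb, mkGamma_val] at this
    simp at this
  · intro h
    have := congrFun (congrArg Subtype.val h) i0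
    rw [hc, mkGamma_val] at this
    simp at this
    exact absurd this (by decide)
  · intro h
    have := congrFun (congrArg Subtype.val h) i0
    rw [hb, hc, mkGamma_val, mkGamma_val] at this
    have h2 := add_left_cancel this
    exact absurd h2 (by decide)
  · ext z
    simp only [Set.mem_setOf_eq, Set.mem_insert_iff, Set.mem_singleton_iff]
    constructor
    · rintro (h | h | h)
      · exact Or.inl (Subtype.ext (sub_eq_zero.mp h))
      · refine Or.inr (Or.inl (Subtype.ext ?_))
        rw [hb, mkGamma_val]
        funext l
        have := congrFun h l
        simp only [Pi.sub_apply] at this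
        linear_combination this
      · refine Or.inr (Or.inr (Subtype.ext ?_))
        rw [hc, mkGamma_val]
        funext l
        have := congrFun h l
        simp only [Pi.sub_apply] at this
        linear_combination this
    · rintro (h | h | h)
      · subst h; exact Or.inl (by simp)
      · subst h
        refine Or.inr (Or.inl ?_)
        funext l
        simp only [Pi.sub_apply, hb, mkGamma_val]
        ring
      · subst h
        refine Or.inr (Or.inr ?_)
        funext l
        simp only [Pi.sub_apply, hc, mkGamma_val]
        ring

lemma sum_fin_split (k : ℕ) (u : Fin (k + 2) → ZMod 3) :
    ∑ l, u l = u 0 + (∑ i : Fin k, u ⟨i.val + 1, by omega⟩) + u ⟨k + 1, by omega⟩ := by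
  rw [Fin.sum_univ_succ, Fin.sum_univ_castSucc]
  have h1 : ∀ i : Fin k, u (Fin.succ (Fin.castSucc i)) = u ⟨i.val + 1, by omega⟩ :=
    fun i => congrArg u (Fin.ext rfl)
  have h2 : u (Fin.succ (Fin.last k)) = u ⟨k + 1, by omega⟩ :=
    congrArg u (Fin.ext rfl)
  rw [Finset.sum_congr rfl (fun i _ => h1 i), h2]
  ring

def keyFun (k : ℕ) (w : Fin k → ZMod 3) : Fin (k + 2) → ZMod 3 :=
  fun l => if h0 : l.val = 0 then 0 else if h : l.val ≤ k then w ⟨l.val - 1, by omega⟩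
    else -(∑ i, w i)

lemma keyFun_zero (k : ℕ) (w : Fin k → ZMod 3) : keyFun k w 0 = 0 := by
  simp [keyFun]

lemma keyFun_mid (k : ℕ) (w : Fin k → ZMod 3) (i : Fin k) :
    keyFun k w ⟨i.val + 1, by omega⟩ = w i := by
  simp only [keyFun]
  rw [dif_neg (by omega), dif_pos (by omega)]
  exact congrArg w (Fin.ext (by simp))

lemma keyFun_last (k : ℕ) (w : Fin k → ZMod 3) :
    keyFun k w ⟨k + 1, by omega⟩ = -(∑ i, w i) := by
  simp only [keyFun]
  rw [dif_neg (by omega), dif_neg (by omega)]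

def keyEquiv (k : ℕ) :
    {v : Fin (k + 2) → ZMod 3 // v 0 = 0 ∧ ∑ l, v l = 0} ≃ (Fin k → ZMod 3) where
  toFun v := fun i => v.1 ⟨i.val + 1, by omega⟩
  invFun w :=
    ⟨keyFun k w, by
      constructor
      · exact keyFun_zero k w
      · rw [sum_fin_split, keyFun_zero, keyFun_last,
          Finset.sum_congr rfl (fun i _ => keyFun_mid k w i)]
        ring⟩
  left_inv v := by
    apply Subtype.ext
    funext l
    show keyFun k (fun i => v.1 ⟨i.val + 1, by omega⟩) l = v.1 l
    by_cases h0 : l.val = 0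
    · have hl : l = 0 := Fin.ext (by simpa using h0)
      rw [hl, keyFun_zero]
      exact (v.2.1).symm
    · by_cases h1 : l.val ≤ k
      · simp only [keyFun]
        rw [dif_neg h0, dif_pos h1]
        exact congrArg v.1 (Fin.ext (by simp; omega))
      · have hl : l = ⟨k + 1, by omega⟩ := Fin.ext (by have := l.isLt; simp; omega)
        rw [hl, keyFun_last]
        have hsum := v.2.2
        rw [sum_fin_split, v.2.1, zero_add] at hsum
        linear_combination -hsum
  right_inv w := by
    funext i
    exact keyFun_mid k w i

def classOf {m : ℕ} (y : GammaVert m) : Set (GammaVert m) :=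
  {z | z.1 - y.1 = 0 ∨ z.1 - y.1 = (fun _ => 1 : Fin m → ZMod 3) ∨
    z.1 - y.1 = (fun _ => 2 : Fin m → ZMod 3)}

lemma zmod3_cases (a : ZMod 3) : a = 0 ∨ a = 1 ∨ a = 2 := by revert a; decide

lemma mem_classOf_iff {m : ℕ} (y z : GammaVert m) :
    z ∈ classOf y ↔ ∃ a : ZMod 3, z.1 - y.1 = fun _ => a := by
  unfold classOf
  simp only [Set.mem_setOf_eq]
  constructor
  · rintro (h | h | h)
    · exact ⟨0, by rw [h]; funext l; rfl⟩
    · exact ⟨1, h⟩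
    · exact ⟨2, h⟩
  · rintro ⟨a, h⟩
    rcases zmod3_cases a with ha | ha | ha <;> subst ha
    · left; rw [h]; funext l; rfl
    · right; left; exact h
    · right; right; exact h

lemma classOf_shift {m : ℕ} (y y' : GammaVert m) (a : ZMod 3)
    (h : y.1 - y'.1 = fun _ => a) : classOf y = classOf y' := by
  ext z
  rw [mem_classOf_iff, mem_classOf_iff]
  constructor
  · rintro ⟨b, hb⟩
    refine ⟨b + a, ?_⟩
    funext l
    have h1 := congrFun hb l
    have h2 := congrFun h l
    simp only [Pi.sub_apply] at h1 h2 ⊢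
    linear_combination h1 + h2
  · rintro ⟨b, hb⟩
    refine ⟨b - a, ?_⟩
    funext l
    have h1 := congrFun hb l
    have h2 := congrFun h l
    simp only [Pi.sub_apply] at h1 h2 ⊢
    linear_combination h1 - h2

lemma part3 (n : ℕ) (hn : 2 ≤ n) :
    Set.ncard {C : Set (GammaVert (3 * n)) | ∃ y : GammaVert (3 * n),
      C = classOf y} = 3 ^ (3 * n - 2) := by
  have hm : (3:ℕ) ∣ 3 * n := ⟨n, rfl⟩
  set i0 : Fin (3 * n) := ⟨0, by omega⟩ with hi0
  set S : Set (GammaVert (3 * n)) := {z | z.1 i0 = 0} with hS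
  have himg : {C : Set (GammaVert (3 * n)) | ∃ y : GammaVert (3 * n), C = classOf y}
      = classOf '' S := by
    ext C
    simp only [Set.mem_setOf_eq, Set.mem_image]
    constructor
    · rintro ⟨y, rfl⟩
      have hsum : ∑ l, (y.1 l - y.1 i0) = 0 := by
        rw [Finset.sum_sub_distrib, y.2, sum_const_zmod hm (y.1 i0), sub_zero]
      refine ⟨mkGamma (fun l => y.1 l - y.1 i0) hsum, ?_, ?_⟩
      · show (mkGamma _ hsum).1 i0 = 0
        rw [mkGamma_val]
        exact sub_self _
      · refine classOf_shift _ y (-(y.1 i0)) ?_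
        funext l
        simp only [Pi.sub_apply, mkGamma_val]
        ring
    · rintro ⟨y, _, rfl⟩
      exact ⟨y, rfl⟩
  have hinj : Set.InjOn classOf S := by
    intro y hy y' hy' heq
    have hmem : y ∈ classOf y := by
      rw [mem_classOf_iff]
      exact ⟨0, by funext l; simp⟩
    rw [heq, mem_classOf_iff] at hmem
    obtain ⟨a, ha⟩ := hmem
    have h0 := congrFun ha i0
    simp only [Pi.sub_apply] at h0
    have hy0 : y.1 i0 = 0 := hy
    have hy'0 : y'.1 i0 = 0 := hy'
    rw [hy0, hy'0, sub_zero] at h0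
    apply Subtype.ext
    funext l
    have := congrFun ha l
    simp only [Pi.sub_apply] at this
    rw [← h0] at this
    linear_combination this
  rw [himg, Set.ncard_image_of_injOn hinj]
  rw [← Nat.card_coe_set_eq]
  obtain ⟨k, hk⟩ : ∃ k, 3 * n = k + 2 := ⟨3 * n - 2, by omega⟩
  have e1 : ↥S ≃ {v : Fin (3 * n) → ZMod 3 // v i0 = 0 ∧ ∑ l, v l = 0} :=
    { toFun := fun z => ⟨z.1.1, z.2, z.1.2⟩
      invFun := fun v => ⟨mkGamma v.1 v.2.2, v.2.1⟩
      left_inv := fun _ => rfl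
      right_inv := fun _ => rfl }
  have e2 : {v : Fin (3 * n) → ZMod 3 // v i0 = 0 ∧ ∑ l, v l = 0} ≃
      {v : Fin (k + 2) → ZMod 3 // v 0 = 0 ∧ ∑ l, v l = 0} := by
    refine Equiv.subtypeEquiv (Equiv.arrowCongr (finCongr hk) (Equiv.refl (ZMod 3))) ?_
    intro v
    have hidx : (finCongr hk).symm 0 = i0 := by
      apply Fin.ext
      simp [hi0]
    have hsum : ∑ l, (Equiv.arrowCongr (finCongr hk) (Equiv.refl (ZMod 3)) v) l
        = ∑ l, v l := by
      simp only [Equiv.arrowCongr_apply, Equiv.refl_apply, Function.comp]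
      exact Equiv.sum_comp (finCongr hk).symm v
    constructor
    · rintro ⟨h1, h2⟩
      refine ⟨?_, by rw [hsum]; exact h2⟩
      simp only [Equiv.arrowCongr_apply, Equiv.refl_apply, Function.comp]
      rw [hidx]
      exact h1
    · rintro ⟨h1, h2⟩
      refine ⟨?_, by rw [← hsum]; exact h2⟩
      simp only [Equiv.arrowCongr_apply, Equiv.refl_apply, Function.comp] at h1
      rw [hidx] at h1
      exact h1
  rw [Nat.card_congr (e1.trans (e2.trans (keyEquiv k))), Nat.card_eq_fintype_card]
  have : 3 * n - 2 = k := by omega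
  rw [this]
  simp

end Helpers

/-- Let `n ≥ 2`. The `(2n-1)`th power of `G_{3n}` is the complete multipartite graph
`K_{3⋆3^(3n-2)}` whose partite sets are the equivalence classes of `∼`, where
`y ∼ z` iff `y - z ∈ {0, (1,…,1), (2,…,2)}`: two vertices are adjacent in the power iff
they are inequivalent, every class has 3 elements, and there are `3^(3n-2)` classes. -/

theorem power_is_complete_multipartite (n : ℕ) (hn : 2 ≤ n) :
    (∀ y z : GammaVert (3 * n),
      ((Gm (3 * n)).power (2 * n - 1)).Adj y z ↔
        (y.1 - z.1 ≠ 0 ∧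
         y.1 - z.1 ≠ (fun _ => 1 : Fin (3 * n) → ZMod 3) ∧
         y.1 - z.1 ≠ (fun _ => 2 : Fin (3 * n) → ZMod 3))) ∧
    (∀ y : GammaVert (3 * n),
      Set.ncard {z : GammaVert (3 * n) |
        z.1 - y.1 = 0 ∨ z.1 - y.1 = (fun _ => 1 : Fin (3 * n) → ZMod 3) ∨
          z.1 - y.1 = (fun _ => 2 : Fin (3 * n) → ZMod 3)} = 3) ∧
    Set.ncard {C : Set (GammaVert (3 * n)) | ∃ y : GammaVert (3 * n),
      C = {z : GammaVert (3 * n) |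
        z.1 - y.1 = 0 ∨ z.1 - y.1 = (fun _ => 1 : Fin (3 * n) → ZMod 3) ∨
          z.1 - y.1 = (fun _ => 2 : Fin (3 * n) → ZMod 3)}} = 3 ^ (3 * n - 2) := by
  refine ⟨fun y z => part1 n hn y z, fun y => part2 n hn y, part3 n hn⟩
end

section
/- For every integer n ≥ 2, the graph G_{3n}^{2n−1} (the (2n−1)th power of G_{3n}) is not chromatic-choosable; consequently, for every integer k ≥ 2 there exists a graph G such that G^{2k−1} is not chromatic-choosable. -/
open SimpleGraph

namespace OddPow

open Finset

variable {m : ℕ}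

lemma xvec_eq (i j : Fin m) (hij : i ≠ j) (l : Fin m) :
    xvec m i j l = (if l = i then 1 else 0) + (if l = j then 2 else 0) := by
  unfold xvec
  by_cases h1 : l = i
  · subst h1
    have : l ≠ j := hij
    simp [this]
  · by_cases h2 : l = j
    · subst h2
      simp [h1]
    · simp [h1, h2]

lemma sum_xvec (i j : Fin m) (hij : i ≠ j) : ∑ l, xvec m i j l = 0 := by
  simp_rw [xvec_eq i j hij]
  rw [Finset.sum_add_distrib, Finset.sum_ite_eq' Finset.univ i, Finset.sum_ite_eq' Finset.univ j]
  simp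
  decide

/-- Sum of generators indexed by a list of pairs. -/
def gensum (L : List (Fin m × Fin m)) : Fin m → ZMod 3 :=
  (L.map (fun p => xvec m p.1 p.2)).sum

lemma gensum_nil : gensum ([] : List (Fin m × Fin m)) = 0 := rfl

lemma gensum_cons (p : Fin m × Fin m) (L : List (Fin m × Fin m)) :
    gensum (p :: L) = xvec m p.1 p.2 + gensum L := by
  simp [gensum]

lemma walk_gensum {u v : GammaVert m} (w : (Gm m).Walk u v) :
    ∃ L : List (Fin m × Fin m), L.length = w.length ∧ (∀ p ∈ L, p.1 ≠ p.2) ∧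
      u.1 - v.1 = gensum L := by
  induction w with
  | nil => exact ⟨[], rfl, by simp, by simp [gensum_nil]⟩
  | @cons a x c h w ih =>
    obtain ⟨i, j, hij, hd⟩ := h
    obtain ⟨L, hlen, hok, hs⟩ := ih
    refine ⟨(i, j) :: L, by rw [List.length_cons, hlen]; rfl, ?_, ?_⟩
    · rintro p hp
      rcases List.mem_cons.mp hp with h | h
      · subst h; exact hij
      · exact hok p h
    · rw [gensum_cons, ← hd, ← hs]
      abel

lemma gensum_walk : ∀ (L : List (Fin m × Fin m)), (∀ p ∈ L, p.1 ≠ p.2) →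
    ∀ u v : GammaVert m, u.1 - v.1 = gensum L →
    ∃ w : (Gm m).Walk u v, w.length = L.length := by
  intro L
  induction L with
  | nil =>
    intro _ u v h
    have : u = v := Subtype.ext (by rw [← sub_eq_zero]; exact h)
    subst this
    exact ⟨SimpleGraph.Walk.nil, rfl⟩
  | cons p L ih =>
    intro hok u v h
    have hp : p.1 ≠ p.2 := hok p (by simp)
    have hx : ∑ i, (u.1 - xvec m p.1 p.2) i = 0 := by
      have h1 : ∑ i, (u.1 - xvec m p.1 p.2) i = (∑ i, u.1 i) - ∑ i, xvec m p.1 p.2 i := by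
        rw [← Finset.sum_sub_distrib]; rfl
      rw [h1, u.2, sum_xvec p.1 p.2 hp, sub_zero]
    set w : GammaVert m := ⟨u.1 - xvec m p.1 p.2, hx⟩ with hw
    have hadj : (Gm m).Adj u w := ⟨p.1, p.2, hp, by simp [hw]⟩
    have hrest : w.1 - v.1 = gensum L := by
      rw [gensum_cons] at h
      have : w.1 - v.1 = (u.1 - v.1) - xvec m p.1 p.2 := by
        simp only [hw]; abel
      rw [this, h]; abel
    obtain ⟨ww, hww⟩ := ih (fun q hq => hok q (List.mem_cons_of_mem _ hq)) w v hrest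
    exact ⟨SimpleGraph.Walk.cons hadj ww, by simp [hww]⟩

end OddPow
namespace OddPow

open Finset

variable {m : ℕ}

lemma gensum_apply (L : List (Fin m × Fin m)) (hok : ∀ p ∈ L, p.1 ≠ p.2) (l : Fin m) :
    gensum L l = (L.countP (fun q => q.1 = l) : ZMod 3)
      + 2 * (L.countP (fun q => q.2 = l) : ZMod 3) := by
  induction L with
  | nil => simp [gensum_nil]
  | cons p L ih =>
    have hp : p.1 ≠ p.2 := hok p (by simp)
    have ih' := ih (fun q hq => hok q (List.mem_cons_of_mem _ hq))
    rw [gensum_cons, Pi.add_apply, ih', List.countP_cons, List.countP_cons]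
    rw [xvec_eq p.1 p.2 hp l]
    by_cases h1 : p.1 = l
    · have h2 : ¬ p.2 = l := fun h => hp (h1.trans h.symm)
      rw [if_pos h1.symm, if_neg (fun h : l = p.2 => h2 h.symm),
        if_pos (decide_eq_true h1), if_neg (fun hh => h2 (of_decide_eq_true hh))]
      push_cast
      ring
    · by_cases h2 : p.2 = l
      · rw [if_neg (fun h : l = p.1 => h1 h.symm), if_pos h2.symm,
          if_neg (fun hh => h1 (of_decide_eq_true hh)), if_pos (decide_eq_true h2)]
        push_cast
        ring
      · rw [if_neg (fun h : l = p.1 => h1 h.symm), if_neg (fun h : l = p.2 => h2 h.symm),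
          if_neg (fun hh => h1 (of_decide_eq_true hh)), if_neg (fun hh => h2 (of_decide_eq_true hh))]
        push_cast
        ring

lemma sum_countP_fst (L : List (Fin m × Fin m)) :
    ∑ l : Fin m, L.countP (fun q => q.1 = l) = L.length := by
  induction L with
  | nil => simp
  | cons p L ih =>
    simp only [List.countP_cons, List.length_cons]
    rw [Finset.sum_add_distrib, ih]
    congr 1
    have : ∀ l : Fin m, (if (decide (p.1 = l)) = true then 1 else 0)
        = if p.1 = l then 1 else 0 := by intro l; simp
    simp_rw [this]
    rw [Finset.sum_ite_eq Finset.univ p.1 (fun _ => 1)]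
    simp

lemma sum_countP_snd (L : List (Fin m × Fin m)) :
    ∑ l : Fin m, L.countP (fun q => q.2 = l) = L.length := by
  induction L with
  | nil => simp
  | cons p L ih =>
    simp only [List.countP_cons, List.length_cons]
    rw [Finset.sum_add_distrib, ih]
    congr 1
    have : ∀ l : Fin m, (if (decide (p.2 = l)) = true then 1 else 0)
        = if p.2 = l then 1 else 0 := by intro l; simp
    simp_rw [this]
    rw [Finset.sum_ite_eq Finset.univ p.2 (fun _ => 1)]
    simp

/-- The key distance lower bound: a sum of generators equal to a nonzero constant
vector uses at least `2m/3` generators. -/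
lemma const_gensum_length (c : ZMod 3) (hc : c = 1 ∨ c = 2)
    (L : List (Fin m × Fin m)) (hok : ∀ p ∈ L, p.1 ≠ p.2)
    (h : gensum L = fun _ => c) : 2 * m ≤ 3 * L.length := by
  set a : Fin m → ℕ := fun l => L.countP (fun q => q.1 = l) with ha
  set b : Fin m → ℕ := fun l => L.countP (fun q => q.2 = l) with hb
  have key : ∀ l : Fin m, ((a l + 2 * b l : ℕ) : ZMod 3) = c := by
    intro l
    have := congrFun h l
    rw [gensum_apply L hok l] at this
    push_cast
    rw [← this]
  have hsa : ∑ l, a l = L.length := sum_countP_fst L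
  have hsb : ∑ l, b l = L.length := sum_countP_snd L
  rcases hc with hc | hc
  · -- c = 1 : per coordinate 2a+b ≥ 2
    have key2 : ∀ l : Fin m, 2 ≤ 2 * a l + b l := by
      intro l
      have h3 : (a l + 2 * b l) % 3 = 1 % 3 := by
        have : ((a l + 2 * b l : ℕ) : ZMod 3) = ((1 : ℕ) : ZMod 3) := by
          rw [key l, hc]; norm_num
        exact (ZMod.natCast_eq_natCast_iff' _ _ _).mp this
      omega
    have : ∑ l : Fin m, 2 ≤ ∑ l : Fin m, (2 * a l + b l) :=
      Finset.sum_le_sum (fun l _ => key2 l)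
    rw [Finset.sum_add_distrib, ← Finset.mul_sum, hsa, hsb] at this
    simp only [Finset.sum_const, Finset.card_univ, Fintype.card_fin, smul_eq_mul] at this
    omega
  · -- c = 2 : per coordinate a+2b ≥ 2
    have key2 : ∀ l : Fin m, 2 ≤ a l + 2 * b l := by
      intro l
      have h3 : (a l + 2 * b l) % 3 = 2 % 3 := by
        have : ((a l + 2 * b l : ℕ) : ZMod 3) = ((2 : ℕ) : ZMod 3) := by
          rw [key l, hc]; norm_num
        exact (ZMod.natCast_eq_natCast_iff' _ _ _).mp this
      omega
    have : ∑ l : Fin m, 2 ≤ ∑ l : Fin m, (a l + 2 * b l) :=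
      Finset.sum_le_sum (fun l _ => key2 l)
    rw [Finset.sum_add_distrib, ← Finset.mul_sum, hsa, hsb] at this
    simp only [Finset.sum_const, Finset.card_univ, Fintype.card_fin, smul_eq_mul] at this
    omega

end OddPow
namespace OddPow

open Finset

variable {m : ℕ}

lemma xvec_fst (i j : Fin m) : xvec m i j i = 1 := by simp [xvec]

lemma xvec_snd (i j : Fin m) (hij : i ≠ j) : xvec m i j j = 2 := by
  have : ¬ (j = i) := fun h => hij h.symm
  simp [xvec, this]

lemma xvec_other (i j l : Fin m) (h1 : l ≠ i) (h2 : l ≠ j) : xvec m i j l = 0 := by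
  simp [xvec, h1, h2]

lemma sum_eq_PQ (d : Fin m → ZMod 3) :
    ∑ i, d i = (((univ.filter fun l => d l = 1).card : ℕ) : ZMod 3)
      + 2 * (((univ.filter fun l => d l = 2).card : ℕ) : ZMod 3) := by
  have h : ∀ x : ZMod 3, x = (if x = 1 then 1 else 0) + (if x = 2 then 2 else 0) := by decide
  rw [Finset.sum_congr rfl (fun i _ => h (d i)), Finset.sum_add_distrib]
  congr 1
  · rw [← Finset.sum_filter, Finset.sum_const, nsmul_eq_mul, mul_one]
  · rw [← Finset.sum_filter, Finset.sum_const, nsmul_eq_mul, mul_comm]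

lemma exists_gensum_aux : ∀ (N : ℕ) (d : Fin m → ZMod 3),
    (univ.filter fun l => d l = 1).card + (univ.filter fun l => d l = 2).card = N →
    (∑ i, d i) = 0 →
    ∃ L : List (Fin m × Fin m), (∀ p ∈ L, p.1 ≠ p.2) ∧ gensum L = d ∧
      3 * L.length = (univ.filter fun l => d l = 1).card + (univ.filter fun l => d l = 2).card
        + max (univ.filter fun l => d l = 1).card (univ.filter fun l => d l = 2).card := by
  intro N
  induction N using Nat.strong_induction_on with
  | _ N ih =>
    intro d hN hsum
    have z01 : (0 : ZMod 3) ≠ 1 := by decide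
    have z02 : (0 : ZMod 3) ≠ 2 := by decide
    have z12 : (1 : ZMod 3) ≠ 2 := by decide
    have z21 : (2 : ZMod 3) ≠ 1 := by decide
    have hmod : ((univ.filter fun l => d l = 1).card
        + 2 * (univ.filter fun l => d l = 2).card) % 3 = 0 := by
      have hcast : (((univ.filter fun l => d l = 1).card
          + 2 * (univ.filter fun l => d l = 2).card : ℕ) : ZMod 3) = 0 := by
        push_cast
        rw [← sum_eq_PQ d, hsum]
      have := (ZMod.natCast_eq_zero_iff _ 3).mp hcast
      omega
    rcases Finset.eq_empty_or_nonempty (univ.filter fun l => d l = 1) with h1 | h1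
    · have hP : (univ.filter fun l => d l = 1).card = 0 := Finset.card_eq_zero.mpr h1
      rcases Finset.eq_empty_or_nonempty (univ.filter fun l => d l = 2) with h2 | h2
      · -- d = 0
        have hd : d = 0 := by
          funext l
          have n1 : d l ≠ 1 := by
            intro h
            have : l ∈ univ.filter fun l => d l = 1 := by simp [h]
            rw [h1] at this; exact absurd this (Finset.notMem_empty l)
          have n2 : d l ≠ 2 := by
            intro h
            have : l ∈ univ.filter fun l => d l = 2 := by simp [h]
            rw [h2] at this; exact absurd this (Finset.notMem_empty l)
          have : ∀ x : ZMod 3, x ≠ 1 → x ≠ 2 → x = 0 := by decide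
          exact this _ n1 n2
        refine ⟨[], by simp, by rw [gensum_nil, hd], ?_⟩
        rw [hP, Finset.card_eq_zero.mpr h2]
        simp
      · -- only 2's; their number Q is a positive multiple of 3
        have hQ3 : 3 ≤ (univ.filter fun l => d l = 2).card := by
          have hQpos : 0 < (univ.filter fun l => d l = 2).card := Finset.card_pos.mpr h2
          omega
        obtain ⟨s, hs, hscard⟩ := Finset.exists_subset_card_eq hQ3
        obtain ⟨i, j, k, hij, hik, hjk, hsijk⟩ := Finset.card_eq_three.mp hscard
        have hki : k ≠ i := fun h => hik h.symm
        have hkj : k ≠ j := fun h => hjk h.symm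
        have hji : j ≠ i := fun h => hij h.symm
        have hmem : ∀ l ∈ s, d l = 2 := fun l hl => (Finset.mem_filter.mp (hs hl)).2
        have hdi : d i = 2 := hmem i (by rw [hsijk]; simp)
        have hdj : d j = 2 := hmem j (by rw [hsijk]; simp)
        have hdk : d k = 2 := hmem k (by rw [hsijk]; simp)
        set d' : Fin m → ZMod 3 := d - xvec m k i - xvec m k j with hd'
        have hvi : d' i = 0 := by
          simp only [hd', Pi.sub_apply]
          rw [xvec_snd k i hki, xvec_other k j i hik hij, hdi]
          ring
        have hvj : d' j = 0 := by
          simp only [hd', Pi.sub_apply]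
          rw [xvec_other k i j hjk hji, xvec_snd k j hkj, hdj]
          ring
        have hvk : d' k = 0 := by
          simp only [hd', Pi.sub_apply]
          rw [xvec_fst, xvec_fst, hdk]
          decide
        have hother : ∀ l, l ≠ i → l ≠ j → l ≠ k → d' l = d l := by
          intro l hli hlj hlk
          simp only [hd', Pi.sub_apply]
          rw [xvec_other k i l hlk hli, xvec_other k j l hlk hlj]
          ring
        have hf1 : (univ.filter fun l => d' l = 1) = (univ.filter fun l => d l = 1) := by
          ext l
          simp only [Finset.mem_filter, Finset.mem_univ, true_and]
          by_cases hli : l = i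
          · subst hli; rw [hvi, hdi]; simp [z01, z21]
          · by_cases hlj : l = j
            · subst hlj; rw [hvj, hdj]; simp [z01, z21]
            · by_cases hlk : l = k
              · subst hlk; rw [hvk, hdk]; simp [z01, z21]
              · rw [hother l hli hlj hlk]
        have hf2 : (univ.filter fun l => d' l = 2)
            = (univ.filter fun l => d l = 2) \ {i, j, k} := by
          ext l
          simp only [Finset.mem_filter, Finset.mem_univ, true_and, Finset.mem_sdiff,
            Finset.mem_insert, Finset.mem_singleton]
          by_cases hli : l = i
          · subst hli; rw [hvi]; simp [z02]
          · by_cases hlj : l = j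
            · subst hlj; rw [hvj]; simp [z02]
            · by_cases hlk : l = k
              · subst hlk; rw [hvk]; simp [z02]
              · rw [hother l hli hlj hlk]; simp [hli, hlj, hlk]
        have hsub : ({i, j, k} : Finset (Fin m)) ⊆ (univ.filter fun l => d l = 2) := by
          rw [← hsijk]; exact hs
        have hc3 : ({i, j, k} : Finset (Fin m)).card = 3 := by rw [← hsijk]; exact hscard
        have hcard2 : (univ.filter fun l => d' l = 2).card
            = (univ.filter fun l => d l = 2).card - 3 := by
          rw [hf2, Finset.card_sdiff_of_subset hsub, hc3]
        have hsum' : ∑ l, d' l = 0 := by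
          simp only [hd', Pi.sub_apply]
          rw [Finset.sum_sub_distrib, Finset.sum_sub_distrib, hsum,
            sum_xvec k i hki, sum_xvec k j hkj]
          ring
        have hNd' : (univ.filter fun l => d' l = 1).card
            + (univ.filter fun l => d' l = 2).card = N - 3 := by
          rw [hf1, hcard2]; omega
        obtain ⟨L', hok', hgs', hlen'⟩ := ih (N - 3) (by omega) d' hNd' hsum'
        refine ⟨(k, i) :: (k, j) :: L', ?_, ?_, ?_⟩
        · rintro p hp
          rcases List.mem_cons.mp hp with h | hp
          · subst h; exact hki
          rcases List.mem_cons.mp hp with h | hp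
          · subst h; exact hkj
          · exact hok' p hp
        · rw [gensum_cons, gensum_cons, hgs', hd']
          abel
        · simp only [List.length_cons]
          rw [hf1, hcard2] at hlen'
          rw [hP] at hlen' ⊢
          omega
    · -- there is a coordinate with value 1
      obtain ⟨i, hi⟩ := h1
      have hPpos : 0 < (univ.filter fun l => d l = 1).card := Finset.card_pos.mpr ⟨i, hi⟩
      have hdi : d i = 1 := (Finset.mem_filter.mp hi).2
      rcases Finset.eq_empty_or_nonempty (univ.filter fun l => d l = 2) with h2 | h2
      · -- only 1's
        have hQ : (univ.filter fun l => d l = 2).card = 0 := Finset.card_eq_zero.mpr h2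
        have hP3 : 3 ≤ (univ.filter fun l => d l = 1).card := by
          omega
        obtain ⟨s, hs, hscard⟩ := Finset.exists_subset_card_eq hP3
        obtain ⟨a, b, c, hab, hac, hbc, hsabc⟩ := Finset.card_eq_three.mp hscard
        have hba : b ≠ a := fun h => hab h.symm
        have hca : c ≠ a := fun h => hac h.symm
        have hcb : c ≠ b := fun h => hbc h.symm
        have hmem : ∀ l ∈ s, d l = 1 := fun l hl => (Finset.mem_filter.mp (hs hl)).2
        have hda : d a = 1 := hmem a (by rw [hsabc]; simp)
        have hdb : d b = 1 := hmem b (by rw [hsabc]; simp)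
        have hdc : d c = 1 := hmem c (by rw [hsabc]; simp)
        set d' : Fin m → ZMod 3 := d - xvec m a c - xvec m b c with hd'
        have hva : d' a = 0 := by
          simp only [hd', Pi.sub_apply]
          rw [xvec_fst, xvec_other b c a hab hac, hda]
          ring
        have hvb : d' b = 0 := by
          simp only [hd', Pi.sub_apply]
          rw [xvec_other a c b hba hbc, xvec_fst, hdb]
          ring
        have hvc : d' c = 0 := by
          simp only [hd', Pi.sub_apply]
          rw [xvec_snd a c hac, xvec_snd b c hbc, hdc]
          decide
        have hother : ∀ l, l ≠ a → l ≠ b → l ≠ c → d' l = d l := by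
          intro l hla hlb hlc
          simp only [hd', Pi.sub_apply]
          rw [xvec_other a c l hla hlc, xvec_other b c l hlb hlc]
          ring
        have hf2 : (univ.filter fun l => d' l = 2) = (univ.filter fun l => d l = 2) := by
          ext l
          simp only [Finset.mem_filter, Finset.mem_univ, true_and]
          by_cases hla : l = a
          · subst hla; rw [hva, hda]; simp [z02, z12]
          · by_cases hlb : l = b
            · subst hlb; rw [hvb, hdb]; simp [z02, z12]
            · by_cases hlc : l = c
              · subst hlc; rw [hvc, hdc]; simp [z02, z12]
              · rw [hother l hla hlb hlc]
        have hf1' : (univ.filter fun l => d' l = 1)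
            = (univ.filter fun l => d l = 1) \ {a, b, c} := by
          ext l
          simp only [Finset.mem_filter, Finset.mem_univ, true_and, Finset.mem_sdiff,
            Finset.mem_insert, Finset.mem_singleton]
          by_cases hla : l = a
          · subst hla; rw [hva]; simp [z01]
          · by_cases hlb : l = b
            · subst hlb; rw [hvb]; simp [z01]
            · by_cases hlc : l = c
              · subst hlc; rw [hvc]; simp [z01]
              · rw [hother l hla hlb hlc]; simp [hla, hlb, hlc]
        have hsub : ({a, b, c} : Finset (Fin m)) ⊆ (univ.filter fun l => d l = 1) := by
          rw [← hsabc]; exact hs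
        have hc3 : ({a, b, c} : Finset (Fin m)).card = 3 := by rw [← hsabc]; exact hscard
        have hcard1 : (univ.filter fun l => d' l = 1).card
            = (univ.filter fun l => d l = 1).card - 3 := by
          rw [hf1', Finset.card_sdiff_of_subset hsub, hc3]
        have hsum' : ∑ l, d' l = 0 := by
          simp only [hd', Pi.sub_apply]
          rw [Finset.sum_sub_distrib, Finset.sum_sub_distrib, hsum,
            sum_xvec a c hac, sum_xvec b c hbc]
          ring
        have hNd' : (univ.filter fun l => d' l = 1).card
            + (univ.filter fun l => d' l = 2).card = N - 3 := by
          rw [hf2, hcard1]; omega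
        obtain ⟨L', hok', hgs', hlen'⟩ := ih (N - 3) (by omega) d' hNd' hsum'
        refine ⟨(a, c) :: (b, c) :: L', ?_, ?_, ?_⟩
        · rintro p hp
          rcases List.mem_cons.mp hp with h | hp
          · subst h; exact hac
          rcases List.mem_cons.mp hp with h | hp
          · subst h; exact hbc
          · exact hok' p hp
        · rw [gensum_cons, gensum_cons, hgs', hd']
          abel
        · simp only [List.length_cons]
          rw [hf2, hcard1] at hlen'
          rw [hQ] at hlen' ⊢
          omega
      · -- one of each: pair them off
        obtain ⟨j, hj⟩ := h2
        have hQpos : 0 < (univ.filter fun l => d l = 2).card := Finset.card_pos.mpr ⟨j, hj⟩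
        have hdj : d j = 2 := (Finset.mem_filter.mp hj).2
        have hij : i ≠ j := fun h => by rw [h, hdj] at hdi; exact absurd hdi (by decide)
        set d' : Fin m → ZMod 3 := d - xvec m i j with hd'
        have hvi : d' i = 0 := by
          simp only [hd', Pi.sub_apply]
          rw [xvec_fst, hdi]
          ring
        have hvj : d' j = 0 := by
          simp only [hd', Pi.sub_apply]
          rw [xvec_snd i j hij, hdj]
          ring
        have hother : ∀ l, l ≠ i → l ≠ j → d' l = d l := by
          intro l hli hlj
          simp only [hd', Pi.sub_apply]
          rw [xvec_other i j l hli hlj]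
          ring
        have hf1 : (univ.filter fun l => d' l = 1) = (univ.filter fun l => d l = 1).erase i := by
          ext l
          simp only [Finset.mem_filter, Finset.mem_univ, true_and, Finset.mem_erase]
          by_cases hli : l = i
          · subst hli; rw [hvi]; simp [z01]
          · by_cases hlj : l = j
            · subst hlj; rw [hvj, hdj]; simp [z01, z21]
            · rw [hother l hli hlj]; simp [hli]
        have hf2 : (univ.filter fun l => d' l = 2) = (univ.filter fun l => d l = 2).erase j := by
          ext l
          simp only [Finset.mem_filter, Finset.mem_univ, true_and, Finset.mem_erase]
          by_cases hli : l = i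
          · subst hli; rw [hvi, hdi]; simp [z02, z12, hij]
          · by_cases hlj : l = j
            · subst hlj; rw [hvj]; simp [z02]
            · rw [hother l hli hlj]; simp [hlj]
        have hcard1 : (univ.filter fun l => d' l = 1).card
            = (univ.filter fun l => d l = 1).card - 1 := by
          rw [hf1, Finset.card_erase_of_mem hi]
        have hcard2 : (univ.filter fun l => d' l = 2).card
            = (univ.filter fun l => d l = 2).card - 1 := by
          rw [hf2, Finset.card_erase_of_mem hj]
        have hsum' : ∑ l, d' l = 0 := by
          simp only [hd', Pi.sub_apply]
          rw [Finset.sum_sub_distrib, hsum, sum_xvec i j hij]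
          ring
        have hNd' : (univ.filter fun l => d' l = 1).card
            + (univ.filter fun l => d' l = 2).card = N - 2 := by
          rw [hcard1, hcard2]; omega
        obtain ⟨L', hok', hgs', hlen'⟩ := ih (N - 2) (by omega) d' hNd' hsum'
        refine ⟨(i, j) :: L', ?_, ?_, ?_⟩
        · rintro p hp
          rcases List.mem_cons.mp hp with h | hp
          · subst h; exact hij
          · exact hok' p hp
        · rw [gensum_cons, hgs', hd']
          abel
        · simp only [List.length_cons]
          rw [hcard1, hcard2] at hlen'
          omega

end OddPow
namespace OddPow

open Finset

/-- The class map: subtract the 0th coordinate. Two vertices have the same `pi0`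
iff they differ by a constant vector. -/
def pi0 {m : ℕ} (hm : 0 < m) (z : GammaVert m) : Fin m → ZMod 3 :=
  fun i => z.1 i - z.1 ⟨0, hm⟩

lemma sub_const_of_pi0_eq {m : ℕ} (hm : 0 < m) {u v : GammaVert m}
    (h : pi0 hm u = pi0 hm v) :
    ∀ i, u.1 i - v.1 i = u.1 ⟨0, hm⟩ - v.1 ⟨0, hm⟩ := by
  intro i
  have := congrFun h i
  unfold pi0 at this
  linear_combination this

lemma pi0_eq_of_sub_const {m : ℕ} (hm : 0 < m) {u v : GammaVert m} (c : ZMod 3)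
    (h : ∀ i, u.1 i - v.1 i = c) : pi0 hm u = pi0 hm v := by
  funext i
  unfold pi0
  linear_combination h i - h ⟨0, hm⟩

theorem power_adj {n : ℕ} (hn : 2 ≤ n) (hm : 0 < 3 * n) (u v : GammaVert (3 * n)) :
    ((Gm (3 * n)).power (2 * n - 1)).Adj u v ↔ pi0 hm u ≠ pi0 hm v := by
  constructor
  · rintro ⟨hne, hreach, hdist⟩ hpi
    set c := u.1 ⟨0, hm⟩ - v.1 ⟨0, hm⟩ with hcdef
    have hc : ∀ i, u.1 i - v.1 i = c := sub_const_of_pi0_eq hm hpi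
    have hcne : c ≠ 0 := by
      intro h0
      apply hne
      apply Subtype.ext
      funext i
      have := hc i
      rw [h0] at this
      exact sub_eq_zero.mp this
    have hc12 : c = 1 ∨ c = 2 := by
      have : ∀ x : ZMod 3, x ≠ 0 → x = 1 ∨ x = 2 := by decide
      exact this c hcne
    obtain ⟨p, hp⟩ := hreach.exists_walk_length_eq_dist
    obtain ⟨L, hLlen, hok, hgs⟩ := walk_gensum p
    have hgc : gensum L = fun _ => c := by
      funext l
      rw [show gensum L l = (u.1 - v.1) l from (congrFun hgs l).symm]
      exact hc l
    have hlb := const_gensum_length c hc12 L hok hgc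
    rw [hLlen, hp] at hlb
    omega
  · intro hpi
    have hne : u ≠ v := fun h => hpi (by rw [h])
    set d : Fin (3 * n) → ZMod 3 := u.1 - v.1 with hd
    have hdi : ∀ i, d i = u.1 i - v.1 i := fun _ => rfl
    have hsumd : ∑ i, d i = 0 := by
      simp only [hd, Pi.sub_apply]
      rw [Finset.sum_sub_distrib, u.2, v.2, sub_zero]
    obtain ⟨L, hok, hgs, hlen⟩ := exists_gensum_aux _ d rfl hsumd
    set P := (univ.filter fun l => d l = 1).card with hP
    set Q := (univ.filter fun l => d l = 2).card with hQ
    have hPQpos : 0 < P + Q := by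
      by_contra h
      apply hne
      apply Subtype.ext
      funext l
      have hP0 : (univ.filter fun l => d l = 1) = ∅ := by
        apply Finset.card_eq_zero.mp; omega
      have hQ0 : (univ.filter fun l => d l = 2) = ∅ := by
        apply Finset.card_eq_zero.mp; omega
      have n1 : d l ≠ 1 := by
        intro h'
        have : l ∈ univ.filter fun l => d l = 1 := by simp [h']
        rw [hP0] at this; exact absurd this (Finset.notMem_empty l)
      have n2 : d l ≠ 2 := by
        intro h'
        have : l ∈ univ.filter fun l => d l = 2 := by simp [h']
        rw [hQ0] at this; exact absurd this (Finset.notMem_empty l)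
      have hz : ∀ x : ZMod 3, x ≠ 1 → x ≠ 2 → x = 0 := by decide
      have := hz _ n1 n2
      rw [hdi l] at this
      exact sub_eq_zero.mp this
    have hPne : P ≠ 3 * n := by
      intro hPm
      apply hpi
      apply pi0_eq_of_sub_const hm 1
      intro i
      have huniv : (univ.filter fun l => d l = 1) = univ := by
        apply Finset.eq_univ_of_card
        rw [← hP, hPm, Fintype.card_fin]
      have : i ∈ univ.filter fun l => d l = 1 := by rw [huniv]; exact Finset.mem_univ i
      have := (Finset.mem_filter.mp this).2
      rw [hdi i] at this
      exact this
    have hQne : Q ≠ 3 * n := by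
      intro hQm
      apply hpi
      apply pi0_eq_of_sub_const hm 2
      intro i
      have huniv : (univ.filter fun l => d l = 2) = univ := by
        apply Finset.eq_univ_of_card
        rw [← hQ, hQm, Fintype.card_fin]
      have : i ∈ univ.filter fun l => d l = 2 := by rw [huniv]; exact Finset.mem_univ i
      have := (Finset.mem_filter.mp this).2
      rw [hdi i] at this
      exact this
    have hPQle : P + Q ≤ 3 * n := by
      have hdisj : Disjoint (univ.filter fun l => d l = 1) (univ.filter fun l => d l = 2) := by
        rw [Finset.disjoint_left]
        intro a ha hb
        have h1 := (Finset.mem_filter.mp ha).2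
        have h2 := (Finset.mem_filter.mp hb).2
        rw [h1] at h2
        exact absurd h2 (by decide)
      calc P + Q = ((univ.filter fun l => d l = 1) ∪ (univ.filter fun l => d l = 2)).card := by
            rw [Finset.card_union_of_disjoint hdisj]
        _ ≤ Fintype.card (Fin (3 * n)) := Finset.card_le_univ _
        _ = 3 * n := Fintype.card_fin _
    have hmod : (P + 2 * Q) % 3 = 0 := by
      have hcast : ((P + 2 * Q : ℕ) : ZMod 3) = 0 := by
        push_cast
        rw [hP, hQ, ← sum_eq_PQ d, hsumd]
      have := (ZMod.natCast_eq_zero_iff _ 3).mp hcast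
      omega
    have hslen : L.length ≤ 2 * n - 1 := by omega
    obtain ⟨w, hw⟩ := gensum_walk L hok u v hgs.symm
    exact ⟨hne, ⟨w⟩, le_trans (SimpleGraph.dist_le w) (by omega)⟩

end OddPow
namespace OddPow

open Finset

theorem multipartite_facts {V C : Type} [Fintype V] [Fintype C] [DecidableEq V] [DecidableEq C]
    (G : SimpleGraph V) (π : V → C) (σ : V → ZMod 3)
    (hadj : ∀ u v, G.Adj u v ↔ π u ≠ π v)
    (hfib : ∀ c, (univ.filter fun v => π v = c).card = 3)
    (hσ : ∀ u v, π u = π v → σ u = σ v → u = v)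
    (hN : 2 ≤ Fintype.card C) :
    G.chromaticNumber = (Fintype.card C : ℕ∞) ∧
      G.listChromaticNumber ≠ Fintype.card C := by
  set N := Fintype.card C with hNdef
  have hcol : G.Colorable N :=
    (SimpleGraph.Coloring.mk π (fun {u v} h => (hadj u v).mp h)).colorable
  have hub : G.chromaticNumber ≤ N := SimpleGraph.chromaticNumber_le_iff_colorable.mpr hcol
  have hcardV : Fintype.card V = 3 * N := by
    rw [← Finset.card_univ,
      Finset.card_eq_sum_card_fiberwise (f := π) (t := univ) (fun x _ => Finset.mem_univ _)]
    rw [Finset.sum_congr rfl (fun c _ => hfib c), Finset.sum_const, Finset.card_univ,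
      smul_eq_mul, mul_comm]
  have hnotcol : ¬ G.Colorable (N - 1) := by
    rintro ⟨f⟩
    have hb : ∀ j : Fin (N - 1), (univ.filter fun v => f v = j).card ≤ 3 := by
      intro j
      rcases Finset.eq_empty_or_nonempty (univ.filter fun v => f v = j) with he | ⟨v0, hv0⟩
      · rw [he]; simp
      · have hfv0 : f v0 = j := (Finset.mem_filter.mp hv0).2
        have hsub : (univ.filter fun v => f v = j) ⊆ (univ.filter fun v => π v = π v0) := by
          intro u hu
          simp only [Finset.mem_filter, Finset.mem_univ, true_and] at hu ⊢
          by_contra hne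
          exact f.valid ((hadj u v0).mpr hne) (hu.trans hfv0.symm)
        calc (univ.filter fun v => f v = j).card
            ≤ (univ.filter fun v => π v = π v0).card := Finset.card_le_card hsub
          _ = 3 := hfib (π v0)
    have hle : Fintype.card V ≤ (N - 1) * 3 := by
      rw [← Finset.card_univ,
        Finset.card_eq_sum_card_fiberwise (f := f) (t := univ) (fun x _ => Finset.mem_univ _)]
      calc ∑ j : Fin (N - 1), (univ.filter fun v => f v = j).card
          ≤ ∑ _j : Fin (N - 1), 3 := Finset.sum_le_sum (fun j _ => hb j)
        _ = (N - 1) * 3 := by rw [Finset.sum_const, Finset.card_univ, Fintype.card_fin,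
              smul_eq_mul]
    omega
  have hchrom : G.chromaticNumber = (N : ℕ∞) := by
    refine le_antisymm hub ?_
    by_contra hlt
    push_neg at hlt
    have hne : G.chromaticNumber ≠ ⊤ := ne_top_of_lt hlt
    obtain ⟨k, hk⟩ := WithTop.ne_top_iff_exists.mp hne
    have hkN : k < N := by
      rw [← hk] at hlt
      exact WithTop.coe_lt_coe.mp hlt
    have hck : G.Colorable k :=
      SimpleGraph.chromaticNumber_le_iff_colorable.mp (le_of_eq hk.symm)
    exact hnotcol (hck.mono (by omega))
  refine ⟨hchrom, ?_⟩
  intro hEq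
  -- the bad list assignment
  set E : Finset ℕ := (Finset.range (N - 2)).image (fun t => t + 4) with hE
  have hEcard : E.card = N - 2 := by
    rw [hE, Finset.card_image_of_injective _ (add_left_injective 4), Finset.card_range]
  have hEge : ∀ x ∈ E, 4 ≤ x := by
    intro x hx
    rw [hE] at hx
    obtain ⟨t, _, rfl⟩ := Finset.mem_image.mp hx
    omega
  set pairB : ZMod 3 → Finset ℕ :=
    fun s => if s = 0 then {1, 2} else if s = 1 then {1, 3} else {2, 3} with hpairB
  have hpairBcard : ∀ s, (pairB s).card = 2 := by
    rw [hpairB]; decide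
  have hpairBsub : ∀ s, ∀ x ∈ pairB s, x = 1 ∨ x = 2 ∨ x = 3 := by
    rw [hpairB]; decide
  set B : Finset ℕ := {1, 2, 3} with hB
  have hBmem : ∀ s, ∀ x ∈ pairB s, x ∈ B := by
    intro s x hx
    rcases hpairBsub s x hx with h | h | h <;> simp [hB, h]
  set Lst : V → Finset ℕ := fun v => pairB (σ v) ∪ E with hLst
  have hLcard : ∀ v, N ≤ (Lst v).card := by
    intro v
    have hdisj : Disjoint (pairB (σ v)) E := by
      rw [Finset.disjoint_left]
      intro x hx hxE
      rcases hpairBsub _ x hx with h | h | h <;> (have := hEge x hxE; omega)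
    rw [hLst]
    simp only
    rw [Finset.card_union_of_disjoint hdisj, hpairBcard, hEcard]
    omega
  have hmemS : G.Choosable Lst := by
    rcases Set.eq_empty_or_nonempty
        {t : ℕ | ∀ L : V → Finset ℕ, (∀ v, t ≤ (L v).card) → G.Choosable L} with hS | hS
    · exfalso
      have : G.listChromaticNumber = 0 := by
        rw [SimpleGraph.listChromaticNumber, hS, Nat.sInf_empty]
      omega
    · have hmem := Nat.sInf_mem hS
      rw [← SimpleGraph.listChromaticNumber, hEq] at hmem
      exact hmem Lst hLcard
  obtain ⟨φ, hφmem, hφprop⟩ := hmemS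
  set Φ : C → Finset ℕ := fun c => (univ.filter fun v => π v = c).image φ with hΦ
  have hdisj : ∀ c c', c ≠ c' → Disjoint (Φ c) (Φ c') := by
    intro c c' hcc
    rw [Finset.disjoint_left]
    intro x hx hx'
    rw [hΦ] at hx hx'
    obtain ⟨u, hu, hux⟩ := Finset.mem_image.mp hx
    obtain ⟨w, hw, hwx⟩ := Finset.mem_image.mp hx'
    have hadj' : G.Adj u w := (hadj u w).mpr (by
      rw [(Finset.mem_filter.mp hu).2, (Finset.mem_filter.mp hw).2]; exact hcc)
    exact hφprop u w hadj' (hux.trans hwx.symm)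
  have hsumE : ∑ c, (Φ c ∩ E).card ≤ N - 2 := by
    have hd : ∀ c ∈ (univ : Finset C), ∀ c' ∈ (univ : Finset C), c ≠ c' →
        Disjoint (Φ c ∩ E) (Φ c' ∩ E) := fun c _ c' _ h =>
      Disjoint.mono Finset.inter_subset_left Finset.inter_subset_left (hdisj c c' h)
    calc ∑ c, (Φ c ∩ E).card = (univ.biUnion fun c => Φ c ∩ E).card :=
          (Finset.card_biUnion hd).symm
      _ ≤ E.card := Finset.card_le_card (by
          intro x hx
          obtain ⟨c, _, hx⟩ := Finset.mem_biUnion.mp hx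
          exact (Finset.mem_inter.mp hx).2)
      _ = N - 2 := hEcard
  have hsumB : ∑ c, (Φ c ∩ B).card ≤ 3 := by
    have hd : ∀ c ∈ (univ : Finset C), ∀ c' ∈ (univ : Finset C), c ≠ c' →
        Disjoint (Φ c ∩ B) (Φ c' ∩ B) := fun c _ c' _ h =>
      Disjoint.mono Finset.inter_subset_left Finset.inter_subset_left (hdisj c c' h)
    calc ∑ c, (Φ c ∩ B).card = (univ.biUnion fun c => Φ c ∩ B).card :=
          (Finset.card_biUnion hd).symm
      _ ≤ B.card := Finset.card_le_card (by
          intro x hx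
          obtain ⟨c, _, hx⟩ := Finset.mem_biUnion.mp hx
          exact (Finset.mem_inter.mp hx).2)
      _ = 3 := by rw [hB]; decide
  have hlow : ∀ c, 2 ≤ 2 * (Φ c ∩ E).card + (Φ c ∩ B).card := by
    intro c
    rcases Finset.eq_empty_or_nonempty (Φ c ∩ E) with he | hne
    swap
    · have := Finset.card_pos.mpr hne
      omega
    · have hfibB : ∀ v, π v = c → φ v ∈ pairB (σ v) := by
        intro v hv
        rcases Finset.mem_union.mp (hφmem v) with h | h
        · exact h
        · exfalso
          have : φ v ∈ Φ c ∩ E := Finset.mem_inter.mpr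
            ⟨Finset.mem_image.mpr ⟨v, Finset.mem_filter.mpr ⟨Finset.mem_univ v, hv⟩, rfl⟩, h⟩
          rw [he] at this
          exact absurd this (Finset.notMem_empty _)
      have himg : (univ.filter fun v => π v = c).image σ = (univ : Finset (ZMod 3)) := by
        apply Finset.eq_univ_of_card
        have hinj : Set.InjOn σ ↑(univ.filter fun v => π v = c) := by
          intro x hx y hy hxy
          simp only [Finset.mem_coe, Finset.mem_filter] at hx hy
          exact hσ x y (hx.2.trans hy.2.symm) hxy
        rw [Finset.card_image_of_injOn hinj, hfib c]
        exact (ZMod.card 3).symm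
      have hget : ∀ s : ZMod 3, ∃ v, π v = c ∧ σ v = s := by
        intro s
        have : s ∈ (univ.filter fun v => π v = c).image σ := by
          rw [himg]; exact Finset.mem_univ s
        obtain ⟨v, hv, hvs⟩ := Finset.mem_image.mp this
        exact ⟨v, (Finset.mem_filter.mp hv).2, hvs⟩
      obtain ⟨v0, hv0, hs0⟩ := hget 0
      obtain ⟨v1, hv1, hs1⟩ := hget 1
      obtain ⟨v2, hv2, hs2⟩ := hget 2
      have hmm : ∀ v, π v = c → φ v ∈ Φ c ∩ B := by
        intro v hv
        exact Finset.mem_inter.mpr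
          ⟨Finset.mem_image.mpr ⟨v, Finset.mem_filter.mpr ⟨Finset.mem_univ v, hv⟩, rfl⟩,
            hBmem _ _ (hfibB v hv)⟩
      by_contra hlt
      push_neg at hlt
      have hb1 : (Φ c ∩ B).card ≤ 1 := by omega
      have heq01 : φ v0 = φ v1 :=
        Finset.card_le_one.mp hb1 _ (hmm v0 hv0) _ (hmm v1 hv1)
      have heq02 : φ v0 = φ v2 :=
        Finset.card_le_one.mp hb1 _ (hmm v0 hv0) _ (hmm v2 hv2)
      have p0 : φ v0 ∈ pairB 0 := by rw [← hs0]; exact hfibB v0 hv0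
      have p1 : φ v0 ∈ pairB 1 := by rw [heq01, ← hs1]; exact hfibB v1 hv1
      have p2 : φ v0 ∈ pairB 2 := by rw [heq02, ← hs2]; exact hfibB v2 hv2
      have hp0 : pairB 0 = {1, 2} := by rw [hpairB]; decide
      have hp1 : pairB 1 = {1, 3} := by rw [hpairB]; decide
      have hp2 : pairB 2 = {2, 3} := by rw [hpairB]; decide
      rw [hp0] at p0
      rw [hp1] at p1
      rw [hp2] at p2
      have e0 : φ v0 = 1 ∨ φ v0 = 2 := by simpa using p0
      have e1 : φ v0 = 1 ∨ φ v0 = 3 := by simpa using p1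
      have e2 : φ v0 = 2 ∨ φ v0 = 3 := by simpa using p2
      omega
  have hfinal : 2 * N ≤ 2 * (N - 2) + 3 := by
    calc 2 * N = ∑ _c : C, 2 := by
          rw [Finset.sum_const, Finset.card_univ, smul_eq_mul, mul_comm]
      _ ≤ ∑ c, (2 * (Φ c ∩ E).card + (Φ c ∩ B).card) :=
          Finset.sum_le_sum (fun c _ => hlow c)
      _ = 2 * (∑ c, (Φ c ∩ E).card) + ∑ c, (Φ c ∩ B).card := by
          rw [Finset.sum_add_distrib, Finset.mul_sum]
      _ ≤ 2 * (N - 2) + 3 := by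
          have := hsumE
          have := hsumB
          omega
  omega

end OddPow
namespace OddPow

open Finset

instance (m : ℕ) : Fintype (GammaVert m) :=
  inferInstanceAs (Fintype {z : Fin m → ZMod 3 // ∑ i, z i = 0})

instance (m : ℕ) : DecidableEq (GammaVert m) :=
  inferInstanceAs (DecidableEq {z : Fin m → ZMod 3 // ∑ i, z i = 0})

lemma cast3n (n : ℕ) : ((3 * n : ℕ) : ZMod 3) = 0 :=
  (ZMod.natCast_eq_zero_iff _ 3).mpr ⟨n, rfl⟩

/-- Shifting a vertex by a constant vector. -/
def shift {n : ℕ} (z : GammaVert (3 * n)) (a : ZMod 3) : GammaVert (3 * n) :=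
  ⟨fun i => z.1 i + a, by
    rw [Finset.sum_add_distrib, z.2, zero_add, Finset.sum_const, Finset.card_univ,
      Fintype.card_fin, nsmul_eq_mul, cast3n, zero_mul]⟩

theorem main_chrom {n : ℕ} (hn : 2 ≤ n) :
    ((Gm (3 * n)).power (2 * n - 1)).chromaticNumber ≠
      (((Gm (3 * n)).power (2 * n - 1)).listChromaticNumber : ℕ∞) := by
  have hm : 0 < 3 * n := by omega
  set H := (Gm (3 * n)).power (2 * n - 1) with hH
  set π0 := pi0 (m := 3 * n) hm with hπ0
  let Cty : Type := {w : Fin (3 * n) → ZMod 3 // w ∈ Set.range π0}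
  haveI : Fintype Cty := inferInstanceAs (Fintype ↥(Set.range π0))
  haveI : DecidableEq Cty := inferInstanceAs (DecidableEq ↥(Set.range π0))
  let π : GammaVert (3 * n) → Cty := fun z => ⟨π0 z, ⟨z, rfl⟩⟩
  let σ : GammaVert (3 * n) → ZMod 3 := fun z => z.1 ⟨0, hm⟩
  have hadj : ∀ u v, H.Adj u v ↔ π u ≠ π v := by
    intro u v
    rw [hH, power_adj hn hm u v]
    constructor
    · intro h hne
      exact h (congrArg Subtype.val hne)
    · intro h hne
      exact h (Subtype.ext hne)
  have hπshift : ∀ (z : GammaVert (3 * n)) (a : ZMod 3), π0 (shift z a) = π0 z := by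
    intro z a
    funext i
    show (z.1 i + a) - (z.1 ⟨0, hm⟩ + a) = z.1 i - z.1 ⟨0, hm⟩
    ring
  have hfib : ∀ c : Cty, (univ.filter fun v => π v = c).card = 3 := by
    rintro ⟨w, z0, hz0⟩
    have hset : (univ.filter fun v => π v = (⟨w, ⟨z0, hz0⟩⟩ : Cty))
        = (univ : Finset (ZMod 3)).image (shift z0) := by
      ext z
      simp only [Finset.mem_filter, Finset.mem_univ, true_and, Finset.mem_image]
      constructor
      · intro h
        have hw : π0 z = w := congrArg Subtype.val h
        have hzz0 : pi0 hm z = pi0 hm z0 := by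
          rw [← hπ0, hw, ← hz0]
        refine ⟨z.1 ⟨0, hm⟩ - z0.1 ⟨0, hm⟩, ?_⟩
        apply Subtype.ext
        funext i
        show z0.1 i + (z.1 ⟨0, hm⟩ - z0.1 ⟨0, hm⟩) = z.1 i
        have hc := sub_const_of_pi0_eq hm hzz0 i
        linear_combination -hc
      · rintro ⟨a, _, rfl⟩
        apply Subtype.ext
        show π0 (shift z0 a) = w
        rw [hπshift, hz0]
    rw [hset, Finset.card_image_of_injective _ ?_]
    · rw [Finset.card_univ]
      exact ZMod.card 3
    · intro a b hab
      have := congrArg (fun z : GammaVert (3 * n) => z.1 ⟨0, hm⟩) hab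
      simpa [shift] using this
  have hσ : ∀ u v, π u = π v → σ u = σ v → u = v := by
    intro u v hp hs
    have hpi : pi0 hm u = pi0 hm v := congrArg Subtype.val hp
    apply Subtype.ext
    funext i
    have hc := sub_const_of_pi0_eq hm hpi i
    have hs' : u.1 ⟨0, hm⟩ = v.1 ⟨0, hm⟩ := hs
    have : u.1 i - v.1 i = 0 := by rw [hc, hs']; ring
    exact sub_eq_zero.mp this
  have hN : 2 ≤ Fintype.card Cty := by
    have h06 : (6 : ℕ) ≤ 3 * n := by omega
    let u0 : GammaVert (3 * n) := ⟨0, by simp⟩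
    let i1 : Fin (3 * n) := ⟨1, by omega⟩
    let i2 : Fin (3 * n) := ⟨2, by omega⟩
    have hne12 : i1 ≠ i2 := by simp [i1, i2, Fin.ext_iff]
    let u1 : GammaVert (3 * n) := ⟨xvec (3 * n) i1 i2, sum_xvec i1 i2 hne12⟩
    have hdiff : π u1 ≠ π u0 := by
      intro h
      have h' : π0 u1 = π0 u0 := congrArg Subtype.val h
      have := congrFun h' i1
      have h1 : π0 u1 i1 = 1 := by
        show xvec (3 * n) i1 i2 i1 - xvec (3 * n) i1 i2 ⟨0, hm⟩ = 1
        rw [xvec_fst, xvec_other i1 i2 ⟨0, hm⟩ (by simp [i1, Fin.ext_iff])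
          (by simp [i2, Fin.ext_iff])]
        ring
      have h0 : π0 u0 i1 = 0 := by
        show (0 : ZMod 3) - 0 = 0
        ring
      rw [h1, h0] at this
      exact absurd this (by decide)
    exact Fintype.one_lt_card_iff.mpr ⟨π u1, π u0, hdiff⟩
  obtain ⟨hc, hl⟩ := multipartite_facts H π σ hadj hfib hσ hN
  intro hfalse
  have : ((Fintype.card Cty : ℕ) : ℕ∞) = (H.listChromaticNumber : ℕ∞) := by
    rw [← hc]
    exact hfalse
  exact hl (Nat.cast_inj.mp this).symm

end OddPow
/-- For every `n ≥ 2`, `G_{3n}^(2n-1)` is not chromatic-choosable; consequently, for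
every `k ≥ 2` there exists a graph `G` such that `G^(2k-1)` is not chromatic-choosable. -/
theorem odd_power_not_chromatic_choosable :
    (∀ n : ℕ, 2 ≤ n →
      ((Gm (3 * n)).power (2 * n - 1)).chromaticNumber ≠
        (((Gm (3 * n)).power (2 * n - 1)).listChromaticNumber : ℕ∞)) ∧
    (∀ k : ℕ, 2 ≤ k →
      ∃ (V : Type) (_ : Fintype V) (G : SimpleGraph V),
        (G.power (2 * k - 1)).chromaticNumber ≠
          ((G.power (2 * k - 1)).listChromaticNumber : ℕ∞)) := by
  constructor
  · intro n hn
    exact OddPow.main_chrom hn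
  · intro k hk
    exact ⟨GammaVert (3 * k), inferInstance, Gm (3 * k), OddPow.main_chrom hk⟩
end

section
/- Let n be a positive integer and let H = K_{3^{3n−2}}[K_3 □ K_3], with vertex set {1, …, 3^{3n−2}} × (V(K_3) × V(K_3)) where V(K_3) = {0,1,2}. Partition V(K_3 □ K_3) into the three rows W_1 = {(0,0),(0,1),(0,2)}, W_2 = {(1,0),(1,1),(1,2)}, W_3 = {(2,0),(2,1),(2,2)}, and set R_i = {1,…,3^{3n−2}} × W_i. Let t be a positive even integer, let A_1, A_2, A_3 be pairwise disjoint color sets each of size t/2, and assign to each vertex v ∈ R_i the list L(v) = (A_1 ∪ A_2 ∪ A_3) ∖ A_i. Then for every proper coloring φ of H with φ(v) ∈ L(v) for all v, and for every i ∈ {1, …, 3^{3n−2}}, the set S_i = {i} × V(K_3 □ K_3) of nine vertices receives at least 5 distinct colors under φ. -/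
open SimpleGraph

/-- Let `n ≥ 1`, `H = K_{3^(3n-2)}[K_3 □ K_3]`, and `t` a positive even integer.
Let `A₁, A₂, A₃` be pairwise disjoint color sets of size `t/2`, and give each vertex
`v = (g, (r, c))` the list `(A₁ ∪ A₂ ∪ A₃) \ A_r` (the row of `v` determines the
removed set). Then every proper coloring `φ` from these lists uses at least 5 distinct
colors on each set `S_i = {i} × V(K_3 □ K_3)`. -/
theorem five_colors_on_each_fiber (n : ℕ) (hn : 1 ≤ n) (t : ℕ) (ht : 0 < t)
    (hte : Even t) (A : Fin 3 → Finset ℕ)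
    (hdisj : ∀ i j : Fin 3, i ≠ j → Disjoint (A i) (A j))
    (hcard : ∀ i : Fin 3, (A i).card = t / 2)
    (φ : Fin (3 ^ (3 * n - 2)) × (Fin 3 × Fin 3) → ℕ)
    (hφL : ∀ v, φ v ∈ (A 0 ∪ A 1 ∪ A 2) \ A v.2.1)
    (hφ : ∀ u v, (SimpleGraph.lexProd (⊤ : SimpleGraph (Fin (3 ^ (3 * n - 2))))
        ((⊤ : SimpleGraph (Fin 3)).boxProd (⊤ : SimpleGraph (Fin 3)))).Adj u v →
      φ u ≠ φ v)
    (i : Fin (3 ^ (3 * n - 2))) :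
    5 ≤ (Finset.univ.image (fun w : Fin 3 × Fin 3 => φ (i, w))).card := by
  classical
  set f : Fin 3 × Fin 3 → ℕ := fun w => φ (i, w) with hf
  -- adjacency within the fiber
  have hadj : ∀ w w' : Fin 3 × Fin 3, w ≠ w' → (w.1 = w'.1 ∨ w.2 = w'.2) →
      f w ≠ f w' := by
    intro w w' hne hrc
    apply hφ (i, w) (i, w')
    rcases hrc with h | h
    · exact Or.inr ⟨rfl, Or.inr ⟨fun h2 => hne (Prod.ext h h2), h⟩⟩
    · exact Or.inr ⟨rfl, Or.inl ⟨fun h1 => hne (Prod.ext h1 h), h⟩⟩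
  have hfiber : ∀ c ∈ Finset.univ.image f,
      (Finset.univ.filter (fun w => f w = c)).card ≤ 2 := by
    intro c hc
    obtain ⟨w0, -, hw0⟩ := Finset.mem_image.mp hc
    have hcU : c ∈ A 0 ∪ A 1 ∪ A 2 := by
      have := hφL (i, w0)
      rw [Finset.mem_sdiff] at this
      rw [← hw0]; exact this.1
    obtain ⟨k, hk⟩ : ∃ k : Fin 3, c ∈ A k := by
      simp only [Finset.mem_union] at hcU
      rcases hcU with (h | h) | h
      exacts [⟨0, h⟩, ⟨1, h⟩, ⟨2, h⟩]
    set S := Finset.univ.filter (fun w => f w = c) with hS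
    have hrow : ∀ w ∈ S, w.1 ≠ k := by
      intro w hw hwk
      rw [hS, Finset.mem_filter] at hw
      have h2 := (Finset.mem_sdiff.mp (hφL (i, w))).2
      rw [hwk] at h2
      exact h2 (by rw [show φ (i, w) = c from hw.2]; exact hk)
    have hinj : Set.InjOn Prod.fst (S : Set (Fin 3 × Fin 3)) := by
      intro w hw w' hw' h1
      by_contra hne
      rw [Finset.mem_coe, Finset.mem_filter] at hw hw'
      exact hadj w w' hne (Or.inl h1) (hw.2.trans hw'.2.symm)
    have hsub : S.image Prod.fst ⊆ Finset.univ.erase k := by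
      intro r hr
      obtain ⟨w, hw, rfl⟩ := Finset.mem_image.mp hr
      exact Finset.mem_erase.mpr ⟨hrow w hw, Finset.mem_univ _⟩
    calc S.card = (S.image Prod.fst).card := (Finset.card_image_of_injOn hinj).symm
      _ ≤ (Finset.univ.erase k).card := Finset.card_le_card hsub
      _ = 2 := by simp
  have h9 : (Finset.univ : Finset (Fin 3 × Fin 3)).card = 9 := by decide
  have hsum := Finset.card_eq_sum_card_fiberwise
    (fun w (_ : w ∈ (Finset.univ : Finset (Fin 3 × Fin 3))) =>
      Finset.mem_image_of_mem f (Finset.mem_univ w))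
  have hle : 9 ≤ 2 * (Finset.univ.image f).card := by
    calc 9 = ∑ c ∈ Finset.univ.image f,
          (Finset.univ.filter (fun w => f w = c)).card := by rw [← h9, hsum]
      _ ≤ ∑ _c ∈ Finset.univ.image f, 2 := Finset.sum_le_sum hfiber
      _ = 2 * (Finset.univ.image f).card := by rw [Finset.sum_const]; ring
  omega
end
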